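/- arXiv:2203.16596 — 2 statements merged into one kernel-verified Lean document; each statement's English description precedes it below -/
import Mathlib

section
/- Let Omega be a properly convex domain in P(R^d), let x, y be points of the closure of Omega, let z be a point of the open segment (x,y), and let p be in the open face F_Omega(x) and q in the open face F_Omega(y). Then the open segment (p,q) is contained in the open face F_Omega(z). In particular, (p,q) is contained in Omega if and only if (x,y) is contained in Omega. -/
open Set Filter Topology

noncomputable section

/-- The vector space `ℝ^d`. -/
abbrev Vd (d : ℕ) := Fin d → ℝ

/-- Real projective space `P(ℝ^d)`. -/
abbrev Proj (d : ℕ) := Projectivization ℝ (Vd d)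

instance (d : ℕ) : TopologicalSpace (Proj d) :=
  instTopologicalSpaceQuotient (s := projectivizationSetoid ℝ (Vd d))

variable {d : ℕ}

/-- The affine chart associated to a nonzero linear functional `f`: a point `[v]` with
`f v ≠ 0` is sent to the representative `v / f v` in the affine hyperplane `{w : f w = 1}`. -/
def pchart (f : Vd d →ₗ[ℝ] ℝ) (x : Proj d) : Vd d := (f x.rep)⁻¹ • x.rep

/-- `C ⊆ P(ℝ^d)` is properly convex, realized in the affine chart determined by `f`:
its closure lies in the chart, and its image there is a bounded convex set. -/
structure IsPC (f : Vd d →ₗ[ℝ] ℝ) (C : Set (Proj d)) : Prop where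
  chartOK : ∀ x ∈ closure C, f (Projectivization.rep x) ≠ 0
  bounded : Bornology.IsBounded (pchart f '' C)
  convex : Convex ℝ (pchart f '' C)

/-- A properly convex domain: a nonempty open properly convex subset of `P(ℝ^d)`. -/
structure IsPCDomain (f : Vd d →ₗ[ℝ] ℝ) (Ω : Set (Proj d)) : Prop where
  pc : IsPC f Ω
  isOpen : IsOpen Ω
  nonempty : Ω.Nonempty

/-- The open projective segment `(x,y)`, computed in the affine chart of `f`. -/
def poseg (f : Vd d →ₗ[ℝ] ℝ) (x y : Proj d) : Set (Proj d) :=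
  {z | ∃ w ∈ openSegment ℝ (pchart f x) (pchart f y), ∃ hw : w ≠ 0, z = Projectivization.mk ℝ w hw}

/-- The closed projective segment `[x,y]`, computed in the affine chart of `f`. -/
def pcseg (f : Vd d →ₗ[ℝ] ℝ) (x y : Proj d) : Set (Proj d) :=
  {z | ∃ w ∈ segment ℝ (pchart f x) (pchart f y), ∃ hw : w ≠ 0, z = Projectivization.mk ℝ w hw}

/-- Parameters `t` for which `x + t(y - x)` lies in the closure of `K`. -/
def segSet (K : Set (Vd d)) (x y : Vd d) : Set ℝ := {t : ℝ | x + t • (y - x) ∈ closure K}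

/-- Hilbert distance on a bounded convex set `K` in an affine chart, via the cross ratio:
with `s = sSup`, `r = sInf` of the parameter set (so the boundary points are
`a = x + r(y-x)`, `b = x + s(y-x)`, ordered `a,x,y,b`), this is
`(1/2) log ( s(1-r) / ((s-1)(-r)) ) = (1/2) log (|x-b||y-a| / (|x-a||y-b|))`. -/
def affHilbertDist (K : Set (Vd d)) (x y : Vd d) : ℝ :=
  if x = y then 0 else
    (1/2) * Real.log ((sSup (segSet K x y) * (1 - sInf (segSet K x y))) /
      ((sSup (segSet K x y) - 1) * (- sInf (segSet K x y))))

/-- The Hilbert metric of a properly convex set `Ω`, in the chart of `f`. -/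
def hdist (f : Vd d →ₗ[ℝ] ℝ) (Ω : Set (Proj d)) (x y : Proj d) : ℝ :=
  affHilbertDist (pchart f '' Ω) (pchart f x) (pchart f y)

/-- The open face of a point `x` of the closure of an affine convex set `K`:
`x` together with all `y` in the closure such that some open segment contained in the closure
contains both `x` and `y`. -/
def affFace (K : Set (Vd d)) (x : Vd d) : Set (Vd d) :=
  insert x {y ∈ closure K | ∃ a b : Vd d, openSegment ℝ a b ⊆ closure K ∧
      x ∈ openSegment ℝ a b ∧ y ∈ openSegment ℝ a b}

/-- The open face `F_C(x)` of a point `x ∈ closure C`, for `C` properly convex in the chart of `f`. -/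
def pface (f : Vd d →ₗ[ℝ] ℝ) (C : Set (Proj d)) (x : Proj d) : Set (Proj d) :=
  insert x {y ∈ closure C | pchart f y ∈ affFace (pchart f '' C) (pchart f x)}

/-- `F_C(A) = ⋃_{x ∈ A} F_C(x)`. -/
def pfaceSet (f : Vd d →ₗ[ℝ] ℝ) (C : Set (Proj d)) (A : Set (Proj d)) : Set (Proj d) :=
  ⋃ x ∈ A, pface f C x

/-- The Hilbert metric of the open face `F_C(x)` (a properly convex set open in its span). -/
def pfaceDist (f : Vd d →ₗ[ℝ] ℝ) (C : Set (Proj d)) (x : Proj d) (p q : Proj d) : ℝ :=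
  affHilbertDist (pchart f '' pface f C x) (pchart f p) (pchart f q)

/-- The ideal boundary `∂ᵢ C = closure C ∩ ∂Ω` of a subset `C` of a domain `Ω`. -/
def idealBdry (Ω C : Set (Proj d)) : Set (Proj d) := closure C ∩ frontier Ω

/-- Linear automorphisms of `ℝ^d` (inducing projective transformations). -/
abbrev GLd (d : ℕ) := (Vd d) ≃ₗ[ℝ] (Vd d)

/-- The projective action of a linear automorphism. -/
def pact (g : GLd d) (x : Proj d) : Proj d := Projectivization.map g.toLinearMap g.injective x

/-- Orbit of a point under a set of linear automorphisms. -/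
def orbitOf (S : Set (GLd d)) (p : Proj d) : Set (Proj d) := {q | ∃ γ ∈ S, q = pact γ p}

/-- The limit set of a set of automorphisms of `Ω`: all boundary accumulation points of orbits. -/
def limitSetOf (Ω : Set (Proj d)) (S : Set (GLd d)) : Set (Proj d) :=
  frontier Ω ∩ ⋃ p ∈ Ω, closure (orbitOf S p)

/-- The limit set of a subgroup. -/
def limitSet (Ω : Set (Proj d)) (Γ : Subgroup (GLd d)) : Set (Proj d) :=
  limitSetOf Ω {γ : GLd d | γ ∈ Γ}

/-- Open `r`-neighborhood of `A` in `(Ω, hdist)`. -/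
def hnbhd (f : Vd d →ₗ[ℝ] ℝ) (Ω A : Set (Proj d)) (r : ℝ) : Set (Proj d) :=
  {x ∈ Ω | ∃ a ∈ A, hdist f Ω x a < r}

/-- Open metric ball in `(Ω, hdist)`. -/
def hball (f : Vd d →ₗ[ℝ] ℝ) (Ω : Set (Proj d)) (x₀ : Proj d) (r : ℝ) : Set (Proj d) :=
  {y ∈ Ω | hdist f Ω x₀ y < r}

/-- The Hilbert-metric diameter of `A` is at most `D`. -/
def DiamLE (f : Vd d →ₗ[ℝ] ℝ) (Ω A : Set (Proj d)) (D : ℝ) : Prop :=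
  ∀ x ∈ A, ∀ y ∈ A, hdist f Ω x y ≤ D

/-- `X` is unbounded in `(Ω, hdist)`. -/
def HUnbounded (f : Vd d →ₗ[ℝ] ℝ) (Ω X : Set (Proj d)) : Prop := ¬ ∃ D : ℝ, DiamLE f Ω X D

/-- A strongly isolated collection: intersections of `r`-neighborhoods of distinct
members have uniformly bounded diameter. -/
def StronglyIsolated (f : Vd d →ₗ[ℝ] ℝ) (Ω : Set (Proj d)) (𝒳 : Set (Set (Proj d))) : Prop :=
  ∀ r > (0:ℝ), ∃ D > (0:ℝ), ∀ X₁ ∈ 𝒳, ∀ X₂ ∈ 𝒳, X₁ ≠ X₂ →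
    DiamLE f Ω (hnbhd f Ω X₁ r ∩ hnbhd f Ω X₂ r) D

/-- A `Γ`-invariant collection of sets. -/
def GInvariant (Γ : Subgroup (GLd d)) (𝒳 : Set (Set (Proj d))) : Prop :=
  ∀ γ ∈ Γ, ∀ X ∈ 𝒳, pact γ '' X ∈ 𝒳

/-- A naive convex co-compact triple `(Ω, C, Γ)`. -/
structure IsNCC (f : Vd d →ₗ[ℝ] ℝ) (Ω C : Set (Proj d)) (Γ : Subgroup (GLd d)) : Prop where
  dom : IsPCDomain f Ω
  subset : C ⊆ Ω
  nonempty : C.Nonempty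
  closedIn : closure C ∩ Ω ⊆ C
  convex : Convex ℝ (pchart f '' C)
  invΩ : ∀ γ ∈ Γ, pact γ '' Ω = Ω
  invC : ∀ γ ∈ Γ, pact γ '' C = C
  discrete : ∀ K : Set (Proj d), K ⊆ Ω → IsCompact K →
      {γ : GLd d | γ ∈ Γ ∧ (pact γ '' K ∩ K).Nonempty}.Finite
  cocompact : ∃ K : Set (Proj d), K ⊆ C ∧ IsCompact K ∧ ∀ x ∈ C, ∃ γ ∈ Γ, pact γ x ∈ K

/-- `𝒳` is a collection of closed unbounded convex subsets of `C`. -/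
structure IsCUC (f : Vd d →ₗ[ℝ] ℝ) (Ω C : Set (Proj d)) (𝒳 : Set (Set (Proj d))) : Prop where
  sub : ∀ X ∈ 𝒳, X ⊆ C
  closedIn : ∀ X ∈ 𝒳, closure X ∩ Ω ⊆ X
  unbdd : ∀ X ∈ 𝒳, HUnbounded f Ω X
  convex : ∀ X ∈ 𝒳, Convex ℝ (pchart f '' X)

/-- The standard `k`-dimensional projective simplex, with vertices `e_0, …, e_k`. -/
def stdSimplexP (d k : ℕ) : Set (Proj d) :=
  {x : Proj d | ∃ (c : Vd d) (hc : c ≠ 0), (∀ i : Fin d, (i : ℕ) ≤ k → 0 < c i) ∧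
      (∀ i : Fin d, k < (i : ℕ) → c i = 0) ∧ x = Projectivization.mk ℝ c hc}

/-- `S` is a `k`-dimensional projective simplex. -/
def IsSimplex (k : ℕ) (S : Set (Proj d)) : Prop :=
  ∃ g : GLd d, pact g '' stdSimplexP d k = S

/-- `S` is properly embedded in `C` (the inclusion is a proper map). -/
def ProperlyEmbedded (C S : Set (Proj d)) : Prop := S ⊆ C ∧ closure S ∩ C ⊆ S

/-- `𝒳` coarsely contains the properly embedded simplices of `C` of dimension at least two. -/
def CoarselyContainsSimplices (f : Vd d →ₗ[ℝ] ℝ) (Ω C : Set (Proj d))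
    (𝒳 : Set (Set (Proj d))) : Prop :=
  ∃ D > (0:ℝ), ∀ k : ℕ, 2 ≤ k → ∀ S : Set (Proj d), IsSimplex k S → ProperlyEmbedded C S →
    ∃ X ∈ 𝒳, S ⊆ hnbhd f Ω X D

/-- A peripheral family of the naive convex co-compact triple `(Ω, C, Γ)`. -/
def IsPeripheralFamily (f : Vd d →ₗ[ℝ] ℝ) (Ω C : Set (Proj d)) (Γ : Subgroup (GLd d))
    (𝒳 : Set (Set (Proj d))) : Prop :=
  GInvariant Γ 𝒳 ∧ StronglyIsolated f Ω 𝒳 ∧ CoarselyContainsSimplices f Ω C 𝒳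

/-- `Hausdorff distance between A and B (w.r.t. the distance function ρ) is at most M`. -/
def HausdorffLE {α : Type*} (ρ : α → α → ℝ) (A B : Set α) (M : ℝ) : Prop :=
  (∀ a ∈ A, ∀ ε > (0:ℝ), ∃ b ∈ B, ρ a b < M + ε) ∧
  (∀ b ∈ B, ∀ ε > (0:ℝ), ∃ a ∈ A, ρ a b < M + ε)

/-- The closed convex hull of `A ⊆ closure Ω` taken inside `closure Ω`, in the chart of `f`. -/
def projConvHull (f : Vd d →ₗ[ℝ] ℝ) (Ω A : Set (Proj d)) : Set (Proj d) :=
  {z ∈ closure Ω | pchart f z ∈ closure (convexHull ℝ (pchart f '' A))}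

/-- The convex core of `Γ`: the closed convex hull of the limit set, intersected with `Ω`. -/
def pcore (f : Vd d →ₗ[ℝ] ℝ) (Ω : Set (Proj d)) (Γ : Subgroup (GLd d)) : Set (Proj d) :=
  projConvHull f Ω (limitSet Ω Γ) ∩ Ω

/-- `Γ` is a convex co-compact subgroup of `Aut(Ω)`. -/
structure IsCCSubgroup (f : Vd d →ₗ[ℝ] ℝ) (Ω : Set (Proj d)) (Γ : Subgroup (GLd d)) : Prop where
  dom : IsPCDomain f Ω
  invΩ : ∀ γ ∈ Γ, pact γ '' Ω = Ω
  discrete : ∀ K : Set (Proj d), K ⊆ Ω → IsCompact K →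
      {γ : GLd d | γ ∈ Γ ∧ (pact γ '' K ∩ K).Nonempty}.Finite
  coreNonempty : (pcore f Ω Γ).Nonempty
  cocompact : ∃ K : Set (Proj d), K ⊆ pcore f Ω Γ ∧ IsCompact K ∧
      ∀ x ∈ pcore f Ω Γ, ∃ γ ∈ Γ, pact γ x ∈ K

lemma pchart_mk (f : Vd d →ₗ[ℝ] ℝ) (v : Vd d) (hv : v ≠ 0) :
    pchart f (Projectivization.mk ℝ v hv) = (f v)⁻¹ • v := by
  obtain ⟨a, ha⟩ := Projectivization.exists_smul_eq_mk_rep ℝ v hv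
  unfold pchart
  rw [← ha]
  rw [Units.smul_def, map_smul, smul_eq_mul, smul_smul]
  rcases eq_or_ne (f v) 0 with h | h
  · simp [h]
  · congr 1
    have : (a:ℝ) ≠ 0 := a.ne_zero
    field_simp

lemma fchart (f : Vd d →ₗ[ℝ] ℝ) (x : Proj d) (h : f x.rep ≠ 0) : f (pchart f x) = 1 := by
  unfold pchart; rw [map_smul, smul_eq_mul, inv_mul_cancel₀ h]

lemma pchart_ne (f : Vd d →ₗ[ℝ] ℝ) (x : Proj d) (h : f x.rep ≠ 0) : pchart f x ≠ 0 := by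
  intro h0
  have := fchart f x h
  rw [h0, map_zero] at this
  norm_num at this

lemma mk_pchart (f : Vd d →ₗ[ℝ] ℝ) (x : Proj d) (h : f x.rep ≠ 0) :
    Projectivization.mk ℝ (pchart f x) (pchart_ne f x h) = x := by
  conv_rhs => rw [← Projectivization.mk_rep x]
  rw [Projectivization.mk_eq_mk_iff]
  exact ⟨Units.mk0 (f x.rep)⁻¹ (inv_ne_zero h), rfl⟩

lemma continuous_mk' : Continuous (Projectivization.mk' ℝ : {v : Vd d // v ≠ 0} → Proj d) :=
  continuous_quotient_mk'

lemma isQuotientMap_mk' : IsQuotientMap (Projectivization.mk' ℝ : {v : Vd d // v ≠ 0} → Proj d) :=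
  isQuotientMap_quotient_mk'

lemma frep_mk (f : Vd d →ₗ[ℝ] ℝ) (v : Vd d) (hv : v ≠ 0) :
    f (Projectivization.mk ℝ v hv).rep = 0 ↔ f v = 0 := by
  obtain ⟨a, ha⟩ := Projectivization.exists_smul_eq_mk_rep ℝ v hv
  rw [← ha, Units.smul_def, map_smul, smul_eq_mul]
  constructor
  · intro h
    rcases mul_eq_zero.1 h with h | h
    · exact absurd h a.ne_zero
    · exact h
  · intro h; rw [h, mul_zero]

lemma isOpen_U (f : Vd d →ₗ[ℝ] ℝ) : IsOpen {x : Proj d | f x.rep ≠ 0} := by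
  rw [← isQuotientMap_mk'.isOpen_preimage]
  have : (Projectivization.mk' ℝ : {v : Vd d // v ≠ 0} → Proj d) ⁻¹' {x | f x.rep ≠ 0}
      = {v : {v : Vd d // v ≠ 0} | f v.val ≠ 0} := by
    ext v
    simp only [mem_preimage, mem_setOf_eq, Projectivization.mk'_eq_mk]
    rw [not_iff_not, frep_mk]
  rw [this]
  exact isOpen_compl_singleton.preimage
    ((f.continuous_of_finiteDimensional).comp continuous_subtype_val)

lemma continuousOn_pchart (f : Vd d →ₗ[ℝ] ℝ) :
    ContinuousOn (pchart f) {x : Proj d | f x.rep ≠ 0} := by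
  rw [continuousOn_open_iff (isOpen_U f)]
  intro t ht
  rw [← isQuotientMap_mk'.isOpen_preimage]
  have : (Projectivization.mk' ℝ : {v : Vd d // v ≠ 0} → Proj d) ⁻¹'
        ({x | f x.rep ≠ 0} ∩ pchart f ⁻¹' t)
      = {v : {v : Vd d // v ≠ 0} | f v.val ≠ 0} ∩
        (fun v : {v : Vd d // v ≠ 0} => (f v.val)⁻¹ • v.val) ⁻¹' t := by
    ext v
    simp only [mem_preimage, mem_inter_iff, mem_setOf_eq, Projectivization.mk'_eq_mk]
    rw [pchart_mk]
    constructor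
    · rintro ⟨h1, h2⟩; exact ⟨fun h => h1 ((frep_mk f v.val v.2).2 h), h2⟩
    · rintro ⟨h1, h2⟩; exact ⟨fun h => h1 ((frep_mk f v.val v.2).1 h), h2⟩
  rw [this]
  refine ContinuousOn.isOpen_inter_preimage ?_ ?_ ht
  · exact ContinuousOn.smul
      (((f.continuous_of_finiteDimensional).comp continuous_subtype_val).continuousOn.inv₀
        (fun v hv => hv))
      continuous_subtype_val.continuousOn
  · exact isOpen_compl_singleton.preimage
      ((f.continuous_of_finiteDimensional).comp continuous_subtype_val)

lemma pchart_mem_closure (f : Vd d →ₗ[ℝ] ℝ) (Ω : Set (Proj d))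
    (hok : ∀ x ∈ closure Ω, f (Projectivization.rep x) ≠ 0) (x : Proj d) (hx : x ∈ closure Ω) :
    pchart f x ∈ closure (pchart f '' Ω) := by
  have h1 : ContinuousOn (pchart f) (closure Ω) :=
    (continuousOn_pchart f).mono (fun y hy => hok y hy)
  have h2 : pchart f '' closure Ω ⊆ closure (pchart f '' Ω) := by
    have := h1.image_closure (s := Ω)
    simpa using this
  exact h2 ⟨x, hx, rfl⟩

lemma mk_mem_closure (f : Vd d →ₗ[ℝ] ℝ) (Ω : Set (Proj d))
    (hok : ∀ x ∈ closure Ω, f (Projectivization.rep x) ≠ 0) (v : Vd d)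
    (hv : v ∈ closure (pchart f '' Ω)) (hv0 : v ≠ 0) :
    Projectivization.mk ℝ v hv0 ∈ closure Ω := by
  have hsub : (⟨v, hv0⟩ : {v : Vd d // v ≠ 0}) ∈
      closure {w : {v : Vd d // v ≠ 0} | w.val ∈ pchart f '' Ω} := by
    rw [closure_subtype]
    refine closure_mono ?_ hv
    rintro w ⟨ω, hω, rfl⟩
    have hω0 : pchart f ω ≠ 0 := pchart_ne f ω (hok ω (subset_closure hω))
    exact ⟨⟨pchart f ω, hω0⟩, ⟨ω, hω, rfl⟩, rfl⟩
  have hmaps : ∀ w ∈ {w : {v : Vd d // v ≠ 0} | w.val ∈ pchart f '' Ω},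
      Projectivization.mk' ℝ w ∈ Ω := by
    rintro w ⟨ω, hω, hw⟩
    have : Projectivization.mk' ℝ w = ω := by
      rw [Projectivization.mk'_eq_mk]
      have := mk_pchart f ω (hok ω (subset_closure hω))
      calc Projectivization.mk ℝ w.val w.2
          = Projectivization.mk ℝ (pchart f ω) (pchart_ne f ω (hok ω (subset_closure hω))) := by
            congr 1; exact hw.symm
        _ = ω := this
    rw [this]; exact hω
  have := (continuous_mk'.continuousOn (s := closure {w : {v : Vd d // v ≠ 0} | w.val ∈ pchart f '' Ω})).image_closure (s := {w : {v : Vd d // v ≠ 0} | w.val ∈ pchart f '' Ω})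
  have hmem : Projectivization.mk' ℝ (⟨v, hv0⟩ : {v : Vd d // v ≠ 0}) ∈
      closure (Projectivization.mk' ℝ '' {w : {v : Vd d // v ≠ 0} | w.val ∈ pchart f '' Ω}) := by
    exact this ⟨_, hsub, rfl⟩
  have : Projectivization.mk' ℝ '' {w : {v : Vd d // v ≠ 0} | w.val ∈ pchart f '' Ω} ⊆ Ω := by
    rintro _ ⟨w, hw, rfl⟩; exact hmaps w hw
  have hfin := closure_mono this hmem
  rwa [Projectivization.mk'_eq_mk] at hfin

lemma conv4 {C : Set (Vd d)} (hC : Convex ℝ C) {a b c e : Vd d}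
    (ha : a ∈ C) (hb : b ∈ C) (hc : c ∈ C) (he : e ∈ C)
    {w1 w2 w3 w4 : ℝ} (h1 : 0 ≤ w1) (h2 : 0 ≤ w2) (h3 : 0 ≤ w3) (h4 : 0 ≤ w4)
    (hsum : w1 + w2 + w3 + w4 = 1) :
    w1 • a + w2 • b + w3 • c + w4 • e ∈ C := by
  have := hC.sum_mem (t := (Finset.univ : Finset (Fin 4)))
    (w := ![w1, w2, w3, w4]) (z := ![a, b, c, e])
    (by intro i _; fin_cases i <;> assumption)
    (by simp [Fin.sum_univ_four]; linarith)
    (by intro i _; fin_cases i <;> assumption)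
  simpa [Fin.sum_univ_four] using this

lemma face_extend {C : Set (Vd d)} {x p : Vd d} (hx : x ∈ C)
    (hp : p = x ∨ ∃ a b : Vd d, openSegment ℝ a b ⊆ C ∧ x ∈ openSegment ℝ a b ∧
      p ∈ openSegment ℝ a b) :
    ∃ r : ℝ, 1 < r ∧ x + r • (p - x) ∈ C ∧ p + r • (x - p) ∈ C := by
  by_cases hpx : p = x
  · subst hpx; exact ⟨2, one_lt_two, by simpa using hx, by simpa using hx⟩
  rcases hp with h | ⟨a, b, hsub, hxm, hpm⟩
  · exact absurd h hpx
  rw [openSegment_eq_image] at hxm hpm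
  obtain ⟨s, hs, hxs⟩ := hxm
  obtain ⟨t, ht, hpt⟩ := hpm
  simp only at hxs hpt
  have hst : s ≠ t := by
    intro hst; apply hpx; rw [← hxs, ← hpt, hst]
  have he : 0 < |t - s| := abs_pos.2 (sub_ne_zero.2 (Ne.symm hst))
  set η : ℝ := min (min s (1 - s)) (min t (1 - t)) with hη
  have hη0 : 0 < η := by
    simp only [hη, lt_min_iff]
    exact ⟨⟨hs.1, by linarith [hs.2]⟩, ⟨ht.1, by linarith [ht.2]⟩⟩
  set r : ℝ := 1 + η / (2 * |t - s|) with hr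
  have hr1 : 1 < r := by
    rw [hr]; nlinarith [div_pos hη0 (by linarith : (0:ℝ) < 2 * |t - s|)]
  have hre : (r - 1) * |t - s| = η / 2 := by
    rw [hr]; field_simp; ring
  refine ⟨r, hr1, ?_, ?_⟩
  · -- x + r • (p - x) = (1 - c) • a + c • b, c = s + r * (t - s)
    set c : ℝ := s + r * (t - s) with hc
    have hcb : |c - t| = (r - 1) * |t - s| := by
      have : c - t = (r - 1) * (t - s) := by rw [hc]; ring
      rw [this, abs_mul, abs_of_pos (by linarith : (0:ℝ) < r - 1)]
    have hct : |c - t| = η / 2 := by rw [hcb, hre]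
    have hc0 : 0 < c := by
      have h1 := abs_le.1 hct.le
      have : η ≤ t := le_trans (min_le_right _ _) (min_le_left _ _)
      linarith [h1.1]
    have hc1 : c < 1 := by
      have h1 := abs_le.1 hct.le
      have : η ≤ 1 - t := le_trans (min_le_right _ _) (min_le_right _ _)
      linarith [h1.2]
    have heq : x + r • (p - x) = (1 - c) • a + c • b := by
      rw [← hxs, ← hpt, hc]; module
    rw [heq]
    apply hsub
    rw [openSegment_eq_image]
    exact ⟨c, ⟨hc0, hc1⟩, rfl⟩
  · set c : ℝ := t + r * (s - t) with hc
    have hcb : |c - s| = (r - 1) * |t - s| := by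
      have : c - s = (r - 1) * (s - t) := by rw [hc]; ring
      rw [this, abs_mul, abs_of_pos (by linarith : (0:ℝ) < r - 1), abs_sub_comm]
    have hct : |c - s| = η / 2 := by rw [hcb, hre]
    have hc0 : 0 < c := by
      have h1 := abs_le.1 hct.le
      have : η ≤ s := le_trans (min_le_left _ _) (min_le_left _ _)
      linarith [h1.1]
    have hc1 : c < 1 := by
      have h1 := abs_le.1 hct.le
      have : η ≤ 1 - s := le_trans (min_le_left _ _) (min_le_right _ _)
      linarith [h1.2]
    have heq : p + r • (x - p) = (1 - c) • a + c • b := by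
      rw [← hxs, ← hpt, hc]; module
    rw [heq]
    apply hsub
    rw [openSegment_eq_image]
    exact ⟨c, ⟨hc0, hc1⟩, rfl⟩

set_option maxHeartbeats 1000000 in
lemma aff_core {C : Set (Vd d)} (hC : Convex ℝ C)
    {x y p q : Vd d} (hxC : x ∈ C) (hyC : y ∈ C) (hpC : p ∈ C) (hqC : q ∈ C)
    {r : ℝ} (hr : 1 < r)
    (h1 : x + r • (p - x) ∈ C) (h2 : p + r • (x - p) ∈ C)
    (h3 : y + r • (q - y) ∈ C) (h4 : q + r • (y - q) ∈ C)
    {lam mu : ℝ} (hlam : lam ∈ Ioo (0:ℝ) 1) (hmu : mu ∈ Ioo (0:ℝ) 1)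
    {z u : Vd d} (hz : z = (1 - lam) • x + lam • y) (hu : u = (1 - mu) • p + mu • q) :
    ∃ δ : ℝ, 0 < δ ∧ (1 + δ) • z - δ • u ∈ C ∧ (1 + δ) • u - δ • z ∈ C := by
  set ε : ℝ := r - 1 with hε
  have hε0 : 0 < ε := by linarith
  set m : ℝ := min (min lam (1 - lam)) (min mu (1 - mu)) with hm
  have hm0 : 0 < m := by
    simp only [hm, lt_min_iff]
    exact ⟨⟨hlam.1, by linarith [hlam.2]⟩, ⟨hmu.1, by linarith [hmu.2]⟩⟩
  have hm1 : m ≤ lam := le_trans (min_le_left _ _) (min_le_left _ _)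
  have hm2 : m ≤ 1 - lam := le_trans (min_le_left _ _) (min_le_right _ _)
  have hm3 : m ≤ mu := le_trans (min_le_right _ _) (min_le_left _ _)
  have hm4 : m ≤ 1 - mu := le_trans (min_le_right _ _) (min_le_right _ _)
  set δ : ℝ := (ε / (1 + ε)) * m / 2 with hδ
  have hδ0 : 0 < δ := by
    apply div_pos (mul_pos (div_pos hε0 (by linarith)) hm0) two_pos
  have hkey : δ * (1 + ε) / ε = m / 2 := by
    rw [hδ]; field_simp
  have hkey' : δ * (1 + ε) = ε * m / 2 := by
    rw [hδ]; field_simp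
  refine ⟨δ, hδ0, ?_, ?_⟩
  · -- a = (1+δ)z - δu = α x'' + β y'' + γ₁ x + γ₂ y
    set α : ℝ := δ * (1 - mu) / ε with hα
    set β : ℝ := δ * mu / ε with hβ
    set γ₁ : ℝ := (1 + δ) * (1 - lam) - δ * (1 - mu) * (1 + ε) / ε with hγ₁
    set γ₂ : ℝ := (1 + δ) * lam - δ * mu * (1 + ε) / ε with hγ₂
    have hα0 : 0 ≤ α := div_nonneg (mul_nonneg hδ0.le (by linarith [hmu.2])) hε0.le
    have hβ0 : 0 ≤ β := by
      apply div_nonneg (mul_nonneg hδ0.le hmu.1.le) hε0.le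
    have hγ₁0 : 0 ≤ γ₁ := by
      rw [hγ₁]
      have e1 : δ * (1 - mu) * (1 + ε) / ε ≤ m / 2 := by
        rw [div_le_iff₀ hε0]
        nlinarith [hkey, mul_nonneg (mul_nonneg hδ0.le hmu.1.le) (show (0:ℝ) ≤ 1 + ε by linarith)]
      nlinarith [e1, hm2, mul_nonneg hδ0.le (show (0:ℝ) ≤ 1 - lam by linarith [hlam.2])]
    have hγ₂0 : 0 ≤ γ₂ := by
      rw [hγ₂]
      have e1 : δ * mu * (1 + ε) / ε ≤ m / 2 := by
        rw [div_le_iff₀ hε0]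
        nlinarith [hkey, mul_nonneg (mul_nonneg hδ0.le (show (0:ℝ) ≤ 1 - mu by linarith [hmu.2])) (show (0:ℝ) ≤ 1 + ε by linarith)]
      nlinarith [e1, hm1, mul_nonneg hδ0.le hlam.1.le]
    have hsum : α + β + γ₁ + γ₂ = 1 := by
      rw [hα, hβ, hγ₁, hγ₂]; field_simp; ring
    have heq : (1 + δ) • z - δ • u =
        α • (p + r • (x - p)) + β • (q + r • (y - q)) + γ₁ • x + γ₂ • y := by
      rw [hz, hu, hα, hβ, hγ₁, hγ₂, hε]
      have hr1 : r - 1 ≠ 0 := sub_ne_zero.2 hr.ne'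
      match_scalars <;> field_simp <;> ring
    rw [heq]
    exact conv4 hC h2 h4 hxC hyC hα0 hβ0 hγ₁0 hγ₂0 hsum
  · set α : ℝ := δ * (1 - lam) / ε with hα
    set β : ℝ := δ * lam / ε with hβ
    set γ₁ : ℝ := (1 + δ) * (1 - mu) - δ * (1 - lam) * (1 + ε) / ε with hγ₁
    set γ₂ : ℝ := (1 + δ) * mu - δ * lam * (1 + ε) / ε with hγ₂
    have hα0 : 0 ≤ α := div_nonneg (mul_nonneg hδ0.le (by linarith [hlam.2])) hε0.le
    have hβ0 : 0 ≤ β := by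
      apply div_nonneg (mul_nonneg hδ0.le hlam.1.le) hε0.le
    have hγ₁0 : 0 ≤ γ₁ := by
      rw [hγ₁]
      have e1 : δ * (1 - lam) * (1 + ε) / ε ≤ m / 2 := by
        rw [div_le_iff₀ hε0]
        nlinarith [hkey, mul_nonneg (mul_nonneg hδ0.le hlam.1.le) (show (0:ℝ) ≤ 1 + ε by linarith)]
      nlinarith [e1, hm4, mul_nonneg hδ0.le (show (0:ℝ) ≤ 1 - mu by linarith [hmu.2])]
    have hγ₂0 : 0 ≤ γ₂ := by
      rw [hγ₂]
      have e1 : δ * lam * (1 + ε) / ε ≤ m / 2 := by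
        rw [div_le_iff₀ hε0]
        nlinarith [hkey, mul_nonneg (mul_nonneg hδ0.le (show (0:ℝ) ≤ 1 - lam by linarith [hlam.2])) (show (0:ℝ) ≤ 1 + ε by linarith)]
      nlinarith [e1, hm3, mul_nonneg hδ0.le hmu.1.le]
    have hsum : α + β + γ₁ + γ₂ = 1 := by
      rw [hα, hβ, hγ₁, hγ₂]; field_simp; ring
    have heq : (1 + δ) • u - δ • z =
        α • (x + r • (p - x)) + β • (y + r • (q - y)) + γ₁ • p + γ₂ • q := by
      rw [hz, hu, hα, hβ, hγ₁, hγ₂, hε]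
      have hr1 : r - 1 ≠ 0 := sub_ne_zero.2 hr.ne'
      match_scalars <;> field_simp <;> ring
    rw [heq]
    exact conv4 hC h1 h3 hpC hqC hα0 hβ0 hγ₁0 hγ₂0 hsum

lemma mem_openSegment_ends {z u : Vd d} {δ : ℝ} (hδ : 0 < δ) :
    z ∈ openSegment ℝ ((1 + δ) • z - δ • u) ((1 + δ) • u - δ • z) ∧
    u ∈ openSegment ℝ ((1 + δ) • z - δ • u) ((1 + δ) • u - δ • z) := by
  have h12 : (0:ℝ) < 1 + 2 * δ := by linarith
  constructor
  · refine ⟨(1 + δ) / (1 + 2 * δ), δ / (1 + 2 * δ), by positivity, by positivity, ?_, ?_⟩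
    · field_simp; ring
    · match_scalars <;> field_simp <;> ring
  · refine ⟨δ / (1 + 2 * δ), (1 + δ) / (1 + 2 * δ), by positivity, by positivity, ?_, ?_⟩
    · field_simp; ring
    · match_scalars <;> field_simp <;> ring

lemma fone_image (f : Vd d →ₗ[ℝ] ℝ) (Ω : Set (Proj d))
    (hok : ∀ x ∈ closure Ω, f (Projectivization.rep x) ≠ 0) :
    ∀ v ∈ pchart f '' Ω, f v = 1 := by
  rintro _ ⟨ω, hω, rfl⟩
  exact fchart f ω (hok ω (subset_closure hω))

lemma fone_closure (f : Vd d →ₗ[ℝ] ℝ) (Ω : Set (Proj d))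
    (hok : ∀ x ∈ closure Ω, f (Projectivization.rep x) ≠ 0) :
    ∀ v ∈ closure (pchart f '' Ω), f v = 1 := by
  intro v hv
  have hcl : closure (pchart f '' Ω) ⊆ {w : Vd d | f w = 1} := by
    apply closure_minimal
    · intro w hw; exact fone_image f Ω hok w hw
    · exact isClosed_eq (f.continuous_of_finiteDimensional) continuous_const
  exact hcl hv

lemma open_in_H (f : Vd d →ₗ[ℝ] ℝ) (Ω : Set (Proj d)) (hopen : IsOpen Ω)
    (hok : ∀ x ∈ closure Ω, f (Projectivization.rep x) ≠ 0) :
    ∀ k ∈ pchart f '' Ω, ∃ ε > (0:ℝ), ∀ v : Vd d, f v = 1 → dist v k < ε → v ∈ pchart f '' Ω := by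
  rintro _ ⟨ω, hω, rfl⟩
  set k := pchart f ω with hk
  have hωok := hok ω (subset_closure hω)
  have hk0 : k ≠ 0 := pchart_ne f ω hωok
  have hW : IsOpen ((Projectivization.mk' ℝ : {v : Vd d // v ≠ 0} → Proj d) ⁻¹' Ω) :=
    hopen.preimage continuous_mk'
  rw [isOpen_induced_iff] at hW
  obtain ⟨t, ht, hpre⟩ := hW
  have hkt : k ∈ t := by
    have : (⟨k, hk0⟩ : {v : Vd d // v ≠ 0}) ∈
        (Subtype.val ⁻¹' t : Set {v : Vd d // v ≠ 0}) := by
      rw [hpre]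
      show Projectivization.mk' ℝ ⟨k, hk0⟩ ∈ Ω
      rw [Projectivization.mk'_eq_mk]
      rw [show Projectivization.mk ℝ k hk0 = ω from mk_pchart f ω hωok]
      exact hω
    exact this
  obtain ⟨ε, hε, hball⟩ := Metric.isOpen_iff.1 ht k hkt
  refine ⟨ε, hε, fun v hv1 hvd => ?_⟩
  have hv0 : v ≠ 0 := by
    intro h; rw [h, map_zero] at hv1; norm_num at hv1
  have hvt : v ∈ t := hball hvd
  have hvΩ : Projectivization.mk ℝ v hv0 ∈ Ω := by
    have : (⟨v, hv0⟩ : {v : Vd d // v ≠ 0}) ∈ (Subtype.val ⁻¹' t : Set {v : Vd d // v ≠ 0}) := hvt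
    rw [hpre] at this
    exact this
  refine ⟨Projectivization.mk ℝ v hv0, hvΩ, ?_⟩
  rw [pchart_mk, hv1, inv_one, one_smul]

lemma open_seg_mem (f : Vd d →ₗ[ℝ] ℝ) {K : Set (Vd d)} (hconv : Convex ℝ K)
    (hopen : ∀ k ∈ K, ∃ ε > (0:ℝ), ∀ v : Vd d, f v = 1 → dist v k < ε → v ∈ K)
    (hK1 : ∀ v ∈ K, f v = 1) (hC1 : ∀ v ∈ closure K, f v = 1)
    {k c : Vd d} (hk : k ∈ K) (hc : c ∈ closure K) {t : ℝ} (ht : t ∈ Ioo (0:ℝ) 1) :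
    (1 - t) • k + t • c ∈ K := by
  obtain ⟨ε, hε, hball⟩ := hopen k hk
  have ht0' : (t:ℝ) ≠ 0 := ne_of_gt ht.1
  have ht1 : 0 < 1 - t := by linarith [ht.2]
  have ht1' : (1:ℝ) - t ≠ 0 := ne_of_gt ht1
  have ht0 : (t:ℝ) ≠ 0 := ne_of_gt ht.1
  have ht1 : 0 < 1 - t := by linarith [ht.2]
  have hδ : 0 < ε * (1 - t) / t := div_pos (mul_pos hε ht1) ht.1
  obtain ⟨c', hc', hcd⟩ := Metric.mem_closure_iff.1 hc _ hδ
  set k' : Vd d := k + (t / (1 - t)) • (c - c') with hk'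
  have hk'1 : f k' = 1 := by
    rw [hk', map_add, map_smul, map_sub, hC1 c hc, hK1 c' hc', hK1 k hk]
    simp
  have hk'd : dist k' k < ε := by
    rw [dist_eq_norm]
    have : k' - k = (t / (1 - t)) • (c - c') := by rw [hk']; abel
    rw [this, norm_smul]
    rw [Real.norm_eq_abs, abs_of_pos (div_pos ht.1 ht1)]
    have hcc : ‖c - c'‖ < ε * (1 - t) / t := by rwa [← dist_eq_norm]
    calc t / (1 - t) * ‖c - c'‖ < t / (1 - t) * (ε * (1 - t) / t) := by
          apply mul_lt_mul_of_pos_left hcc (div_pos ht.1 ht1)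
      _ = ε := by field_simp
  have hk'K : k' ∈ K := hball k' hk'1 hk'd
  have heq : (1 - t) • k + t • c = (1 - t) • k' + t • c' := by
    rw [hk']
    match_scalars <;> field_simp <;> ring
  rw [heq]
  exact hconv hk'K hc' ht1.le ht.1.le (by ring)

lemma affFace_mem (f : Vd d →ₗ[ℝ] ℝ) {K : Set (Vd d)} (hconv : Convex ℝ K)
    (hopen : ∀ k ∈ K, ∃ ε > (0:ℝ), ∀ v : Vd d, f v = 1 → dist v k < ε → v ∈ K)
    (hK1 : ∀ v ∈ K, f v = 1) (hC1 : ∀ v ∈ closure K, f v = 1)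
    {k w : Vd d} (hk : k ∈ K) (hw : w ∈ affFace K k) : w ∈ K := by
  rcases hw with h | ⟨hwC, a, b, hsub, hkm, hwm⟩
  · rwa [h]
  rw [openSegment_eq_image] at hkm hwm
  obtain ⟨s, hs, hks⟩ := hkm
  obtain ⟨t, ht, hwt⟩ := hwm
  simp only at hks hwt
  by_cases hst : s = t
  · rw [← hwt, ← hst, hks]; exact hk
  rcases lt_or_gt_of_ne hst with hlt | hgt
  · -- s < t : take m = (t+1)/2 ∈ (t,1), τ = (t-s)/(m-s)
    set m : ℝ := (t + 1) / 2 with hm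
    have hm1 : m < 1 := by rw [hm]; linarith [ht.2]
    have hmt : t < m := by rw [hm]; linarith [ht.2]
    have hm0 : 0 < m := by linarith [ht.1]
    have hms : s < m := by linarith
    have hms' : m - s ≠ 0 := by intro h; linarith [sub_eq_zero.1 h]
    set τ : ℝ := (t - s) / (m - s) with hτ
    have hτ0 : 0 < τ := div_pos (by linarith) (by linarith)
    have hτ1 : τ < 1 := by
      rw [hτ, div_lt_one (by linarith : (0:ℝ) < m - s)]; linarith
    have hcC : (1 - m) • a + m • b ∈ closure K := by
      apply hsub
      rw [openSegment_eq_image]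
      exact ⟨m, ⟨hm0, hm1⟩, rfl⟩
    have heq : w = (1 - τ) • k + τ • ((1 - m) • a + m • b) := by
      rw [← hwt, ← hks, hτ]
      match_scalars <;> field_simp <;> ring
    rw [heq]
    exact open_seg_mem f hconv hopen hK1 hC1 hk hcC ⟨hτ0, hτ1⟩
  · -- t < s : take m = t/2 ∈ (0,t), τ = (t-s)/(m-s) = (s-t)/(s-m)
    set m : ℝ := t / 2 with hm
    have hm0 : 0 < m := by rw [hm]; linarith [ht.1]
    have hmt : m < t := by rw [hm]; linarith [ht.1]
    have hm1 : m < 1 := by linarith [ht.2]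
    have hms : m < s := by linarith
    have hms' : m - s ≠ 0 := by intro h; linarith [sub_eq_zero.1 h]
    set τ : ℝ := (t - s) / (m - s) with hτ
    have hτ0 : 0 < τ := div_pos_of_neg_of_neg (by linarith) (by linarith)
    have hτ1 : τ < 1 := by
      rw [hτ, div_lt_one_of_neg (by linarith : m - s < 0)]; linarith
    have hcC : (1 - m) • a + m • b ∈ closure K := by
      apply hsub
      rw [openSegment_eq_image]
      exact ⟨m, ⟨hm0, hm1⟩, rfl⟩
    have heq : w = (1 - τ) • k + τ • ((1 - m) • a + m • b) := by
      rw [← hwt, ← hks, hτ]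
      match_scalars <;> field_simp <;> ring
    rw [heq]
    exact open_seg_mem f hconv hopen hK1 hC1 hk hcC ⟨hτ0, hτ1⟩

lemma pchart_inj (f : Vd d →ₗ[ℝ] ℝ) {u w : Proj d} (hu : f u.rep ≠ 0) (hw : f w.rep ≠ 0)
    (h : pchart f u = pchart f w) : u = w := by
  rw [← mk_pchart f u hu, ← mk_pchart f w hw]
  rw [Projectivization.mk_eq_mk_iff]
  exact ⟨1, by simp [h]⟩

lemma poseg_elim (f : Vd d →ₗ[ℝ] ℝ) (Ω : Set (Proj d))
    (hok : ∀ x ∈ closure Ω, f (Projectivization.rep x) ≠ 0)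
    (hconv : Convex ℝ (pchart f '' Ω)) {x y z : Proj d}
    (hx : x ∈ closure Ω) (hy : y ∈ closure Ω) (hz : z ∈ poseg f x y) :
    z ∈ closure Ω ∧ pchart f z ∈ openSegment ℝ (pchart f x) (pchart f y) := by
  obtain ⟨w, hwseg, hw0, rfl⟩ := hz
  obtain ⟨u₁, v₁, hu₁, hv₁, huv, hcomb⟩ := hwseg
  have hfw : f w = 1 := by
    rw [← hcomb, map_add, map_smul, map_smul, fchart f x (hok x hx), fchart f y (hok y hy),
      smul_eq_mul, smul_eq_mul, mul_one, mul_one, huv]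
  have hpz : pchart f (Projectivization.mk ℝ w hw0) = w := by
    rw [pchart_mk, hfw, inv_one, one_smul]
  have hwC : w ∈ closure (pchart f '' Ω) := by
    have hcx := pchart_mem_closure f Ω hok x hx
    have hcy := pchart_mem_closure f Ω hok y hy
    have := openSegment_subset_segment ℝ (pchart f x) (pchart f y)
      (⟨u₁, v₁, hu₁, hv₁, huv, hcomb⟩ : w ∈ openSegment ℝ (pchart f x) (pchart f y))
    exact hconv.closure.segment_subset hcx hcy this
  refine ⟨mk_mem_closure f Ω hok w hwC hw0, ?_⟩
  rw [hpz]
  exact ⟨u₁, v₁, hu₁, hv₁, huv, hcomb⟩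

lemma pface_elim (f : Vd d →ₗ[ℝ] ℝ) (Ω : Set (Proj d)) {x p : Proj d}
    (hx : x ∈ closure Ω) (hp : p ∈ pface f Ω x) :
    p ∈ closure Ω ∧ (pchart f p = pchart f x ∨
      ∃ a b : Vd d, openSegment ℝ a b ⊆ closure (pchart f '' Ω) ∧
        pchart f x ∈ openSegment ℝ a b ∧ pchart f p ∈ openSegment ℝ a b) := by
  rcases Set.mem_insert_iff.1 hp with rfl | ⟨hpcl, haff⟩
  · exact ⟨hx, Or.inl rfl⟩
  · rcases Set.mem_insert_iff.1 haff with h | ⟨_, a, b, hsub, hxm, hpm⟩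
    · exact ⟨hpcl, Or.inl h⟩
    · exact ⟨hpcl, Or.inr ⟨a, b, hsub, hxm, hpm⟩⟩

lemma shrink {C : Set (Vd d)} (hC : Convex ℝ C) {x v : Vd d} (hx : x ∈ C) {r r₁ : ℝ}
    (h : x + r₁ • v ∈ C) (h0 : 0 ≤ r) (hle : r ≤ r₁) : x + r • v ∈ C := by
  rcases eq_or_lt_of_le (h0.trans hle) with h1 | h1
  · have : r = 0 := le_antisymm (hle.trans h1.symm.le) h0
    rw [this, zero_smul, add_zero]; exact hx
  · have heq : x + r • v = (1 - r / r₁) • x + (r / r₁) • (x + r₁ • v) := by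
      have : r₁ ≠ 0 := h1.ne'
      match_scalars <;> field_simp <;> ring
    rw [heq]
    exact hC hx h (by rw [sub_nonneg, div_le_one h1]; exact hle) (div_nonneg h0 h1.le) (by ring)

lemma main_incl (f : Vd d →ₗ[ℝ] ℝ) (Ω : Set (Proj d)) (hΩ : IsPCDomain f Ω)
    {x y z p q : Proj d} (hx : x ∈ closure Ω) (hy : y ∈ closure Ω)
    (hz : z ∈ poseg f x y) (hp : p ∈ pface f Ω x) (hq : q ∈ pface f Ω y) :
    poseg f p q ⊆ pface f Ω z := by
  have hok := hΩ.pc.chartOK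
  have hconvK := hΩ.pc.convex
  have hconvC := hconvK.closure
  obtain ⟨hzcl, hzseg⟩ := poseg_elim f Ω hok hconvK hx hy hz
  obtain ⟨hpcl, hpface⟩ := pface_elim f Ω hx hp
  obtain ⟨hqcl, hqface⟩ := pface_elim f Ω hy hq
  intro u hu
  obtain ⟨hucl, huseg⟩ := poseg_elim f Ω hok hconvK hpcl hqcl hu
  have hcx := pchart_mem_closure f Ω hok x hx
  have hcy := pchart_mem_closure f Ω hok y hy
  have hcp := pchart_mem_closure f Ω hok p hpcl
  have hcq := pchart_mem_closure f Ω hok q hqcl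
  obtain ⟨r₁, hr₁, h1, h2⟩ := face_extend hcx hpface
  obtain ⟨r₂, hr₂, h3, h4⟩ := face_extend hcy hqface
  set r := min r₁ r₂ with hr
  have hrr : 1 < r := lt_min hr₁ hr₂
  have h1' : pchart f x + r • (pchart f p - pchart f x) ∈ closure (pchart f '' Ω) :=
    shrink hconvC hcx h1 (by linarith) (min_le_left _ _)
  have h2' : pchart f p + r • (pchart f x - pchart f p) ∈ closure (pchart f '' Ω) :=
    shrink hconvC hcp h2 (by linarith) (min_le_left _ _)
  have h3' : pchart f y + r • (pchart f q - pchart f y) ∈ closure (pchart f '' Ω) :=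
    shrink hconvC hcy h3 (by linarith) (min_le_right _ _)
  have h4' : pchart f q + r • (pchart f y - pchart f q) ∈ closure (pchart f '' Ω) :=
    shrink hconvC hcq h4 (by linarith) (min_le_right _ _)
  obtain ⟨u₁, v₁, hu₁, hv₁, huv₁, hcomb₁⟩ := hzseg
  obtain ⟨u₂, v₂, hu₂, hv₂, huv₂, hcomb₂⟩ := huseg
  have hzc : pchart f z = (1 - v₁) • pchart f x + v₁ • pchart f y := by
    rw [show (1:ℝ) - v₁ = u₁ from by linarith]; exact hcomb₁.symm
  have huc : pchart f u = (1 - v₂) • pchart f p + v₂ • pchart f q := by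
    rw [show (1:ℝ) - v₂ = u₂ from by linarith]; exact hcomb₂.symm
  have hv₁' : v₁ ∈ Ioo (0:ℝ) 1 := ⟨hv₁, by linarith⟩
  have hv₂' : v₂ ∈ Ioo (0:ℝ) 1 := ⟨hv₂, by linarith⟩
  obtain ⟨δ, hδ0, haC, hbC⟩ :=
    aff_core hconvC hcx hcy hcp hcq hrr h1' h2' h3' h4' hv₁' hv₂' hzc huc
  obtain ⟨hzm, hum⟩ := mem_openSegment_ends (z := pchart f z) (u := pchart f u) hδ0
  refine Set.mem_insert_iff.2 (Or.inr ⟨hucl, ?_⟩)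
  refine Set.mem_insert_iff.2 (Or.inr
    ⟨pchart_mem_closure f Ω hok u hucl, _, _, ?_, hzm, hum⟩)
  exact fun w hw => hconvC.segment_subset haC hbC (openSegment_subset_segment ℝ _ _ hw)

lemma pface_sub_closure (f : Vd d →ₗ[ℝ] ℝ) (Ω : Set (Proj d)) {x p : Proj d}
    (hx : x ∈ closure Ω) (hp : p ∈ pface f Ω x) : p ∈ closure Ω := by
  rcases Set.mem_insert_iff.1 hp with rfl | ⟨hpcl, _⟩
  · exact hx
  · exact hpcl

lemma pface_sub_omega (f : Vd d →ₗ[ℝ] ℝ) (Ω : Set (Proj d)) (hΩ : IsPCDomain f Ω)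
    {z : Proj d} (hzΩ : z ∈ Ω) : pface f Ω z ⊆ Ω := by
  have hok := hΩ.pc.chartOK
  intro u hu
  rcases Set.mem_insert_iff.1 hu with rfl | ⟨hucl, haff⟩
  · exact hzΩ
  · have hzK : pchart f z ∈ pchart f '' Ω := ⟨z, hzΩ, rfl⟩
    have huK : pchart f u ∈ pchart f '' Ω :=
      affFace_mem f hΩ.pc.convex (open_in_H f Ω hΩ.isOpen hok)
        (fone_image f Ω hok) (fone_closure f Ω hok) hzK haff
    obtain ⟨ω, hω, hωeq⟩ := huK
    have : ω = u := pchart_inj f (hok ω (subset_closure hω)) (hok u hucl) hωeq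
    rwa [← this]

lemma pface_sym (f : Vd d →ₗ[ℝ] ℝ) (Ω : Set (Proj d))
    (hok : ∀ x ∈ closure Ω, f (Projectivization.rep x) ≠ 0)
    {x p : Proj d} (hx : x ∈ closure Ω) (hp : p ∈ pface f Ω x) : x ∈ pface f Ω p := by
  rcases Set.mem_insert_iff.1 hp with rfl | ⟨hpcl, haff⟩
  · exact Set.mem_insert _ _
  · rcases Set.mem_insert_iff.1 haff with h | ⟨hpC', a, b, hsub, hxm, hpm⟩
    · have : p = x := pchart_inj f (hok p hpcl) (hok x hx) h
      rw [this]; exact Set.mem_insert _ _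
    · exact Set.mem_insert_iff.2 (Or.inr ⟨hx,
        Set.mem_insert_iff.2 (Or.inr
          ⟨pchart_mem_closure f Ω hok x hx, a, b, hsub, hpm, hxm⟩)⟩)

lemma poseg_nonempty (f : Vd d →ₗ[ℝ] ℝ) {p q : Proj d}
    (hp : f p.rep ≠ 0) (hq : f q.rep ≠ 0) : ∃ z', z' ∈ poseg f p q := by
  set w : Vd d := (1/2 : ℝ) • pchart f p + (1/2 : ℝ) • pchart f q with hw
  have hfw : f w = 1 := by
    rw [hw, map_add, map_smul, map_smul, fchart f p hp, fchart f q hq]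
    norm_num
  have hw0 : w ≠ 0 := by
    intro h; rw [h, map_zero] at hfw; norm_num at hfw
  exact ⟨Projectivization.mk ℝ w hw0,
    ⟨w, ⟨1/2, 1/2, by norm_num, by norm_num, by norm_num, rfl⟩, hw0, rfl⟩⟩


/-- if `z ∈ (x,y)`, `p ∈ F_Ω(x)`, `q ∈ F_Ω(y)`, then `(p,q) ⊆ F_Ω(z)`;
in particular `(p,q) ⊆ Ω ↔ (x,y) ⊆ Ω`. -/
theorem stmt_1 {d : ℕ} (f : Vd d →ₗ[ℝ] ℝ) (Ω : Set (Proj d)) (hΩ : IsPCDomain f Ω)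
    (x y z p q : Proj d) (hx : x ∈ closure Ω) (hy : y ∈ closure Ω)
    (hz : z ∈ poseg f x y) (hp : p ∈ pface f Ω x) (hq : q ∈ pface f Ω y) :
    poseg f p q ⊆ pface f Ω z ∧ (poseg f p q ⊆ Ω ↔ poseg f x y ⊆ Ω) := by
  have hok := hΩ.pc.chartOK
  have hconvK := hΩ.pc.convex
  have hincl := main_incl f Ω hΩ hx hy hz hp hq
  have hpcl : p ∈ closure Ω := pface_sub_closure f Ω hx hp
  have hqcl : q ∈ closure Ω := pface_sub_closure f Ω hy hq
  refine ⟨hincl, ?_, ?_⟩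
  · -- (p,q) ⊆ Ω → (x,y) ⊆ Ω
    intro hseg
    obtain ⟨z', hz'⟩ := poseg_nonempty f (hok p hpcl) (hok q hqcl)
    have hz'Ω : z' ∈ Ω := hseg hz'
    have hx' : x ∈ pface f Ω p := pface_sym f Ω hok hx hp
    have hy' : y ∈ pface f Ω q := pface_sym f Ω hok hy hq
    have := main_incl f Ω hΩ hpcl hqcl hz' hx' hy'
    exact fun v hv => pface_sub_omega f Ω hΩ hz'Ω (this hv)
  · -- (x,y) ⊆ Ω → (p,q) ⊆ Ω
    intro hseg
    have hzΩ : z ∈ Ω := hseg hz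
    exact fun v hv => pface_sub_omega f Ω hΩ hzΩ (hincl hv)
end
end

section
/- Let Omega be a properly convex domain in P(R^d) with Hilbert metric d_Omega. Suppose {p_n} and {q_n} are sequences in Omega with p_n converging to p and q_n converging to q in the closure of Omega, and liminf d_Omega(p_n, q_n) < infinity. Then p and q lie in the same open face F of the boundary of Omega (or both in Omega), and d_F(p,q) <= liminf d_Omega(p_n, q_n), where d_F is the Hilbert metric of the face F viewed as a properly convex set open in its span. -/
open Set Filter Topology

noncomputable section

variable {d : ℕ}

namespace St2
variable {f : Vd d →ₗ[ℝ] ℝ}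

lemma pchart_mk {v : Vd d} (hv : v ≠ 0) :
    pchart f (Projectivization.mk ℝ v hv) = (f v)⁻¹ • v := by
  obtain ⟨a, ha⟩ := Projectivization.exists_smul_eq_mk_rep ℝ v hv
  unfold pchart
  rw [← ha, Units.smul_def, map_smul, smul_smul, smul_eq_mul, mul_inv]
  congr 1
  rcases eq_or_ne (f v) 0 with h | h
  · simp [h]
  · field_simp

lemma f_pchart {x : Proj d} (hx : f x.rep ≠ 0) : f (pchart f x) = 1 := by
  unfold pchart; rw [map_smul, smul_eq_mul, inv_mul_cancel₀ hx]

lemma pchart_ne_zero {x : Proj d} (hx : f x.rep ≠ 0) : pchart f x ≠ 0 := by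
  intro h
  have := f_pchart hx
  rw [h, map_zero] at this
  norm_num at this

lemma mk_pchart {x : Proj d} (hx : f x.rep ≠ 0) :
    Projectivization.mk ℝ (pchart f x) (pchart_ne_zero hx) = x := by
  conv_rhs => rw [← x.mk_rep]
  rw [Projectivization.mk_eq_mk_iff']
  exact ⟨(f x.rep)⁻¹, rfl⟩

lemma pchart_inj {x y : Proj d} (hx : f x.rep ≠ 0) (hy : f y.rep ≠ 0)
    (h : pchart f x = pchart f y) : x = y := by
  rw [← mk_pchart hx, ← mk_pchart hy]
  simp only [Projectivization.mk_eq_mk_iff']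
  exact ⟨1, by simp [h]⟩

lemma fcont : Continuous f := f.continuous_of_finiteDimensional

lemma isOpen_chart_set {W : Set (Vd d)} (hW : IsOpen W) :
    IsOpen {z : Proj d | f z.rep ≠ 0 ∧ pchart f z ∈ W} := by
  have hq : IsQuotientMap (@Quotient.mk' _ (projectivizationSetoid ℝ (Vd d))) :=
    isQuotientMap_quotient_mk'
  apply hq.isOpen_preimage.1
  have hpre : (@Quotient.mk' _ (projectivizationSetoid ℝ (Vd d))) ⁻¹'
      {z : Proj d | f z.rep ≠ 0 ∧ pchart f z ∈ W} =
      (fun v : {w : Vd d // w ≠ 0} => (v : Vd d)) ⁻¹' {v : Vd d | f v ≠ 0 ∧ (f v)⁻¹ • v ∈ W} := by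
    ext ⟨v, hv⟩
    show (f (Projectivization.mk ℝ v hv).rep ≠ 0 ∧ pchart f (Projectivization.mk ℝ v hv) ∈ W) ↔
      (f v ≠ 0 ∧ (f v)⁻¹ • v ∈ W)
    obtain ⟨a, ha⟩ := Projectivization.exists_smul_eq_mk_rep ℝ v hv
    have hrep : f (Projectivization.mk ℝ v hv).rep = (a : ℝ) * f v := by
      rw [← ha, Units.smul_def, map_smul, smul_eq_mul]
    rw [hrep, pchart_mk]
    constructor
    · rintro ⟨h1, h2⟩
      exact ⟨fun h => h1 (by rw [h, mul_zero]), h2⟩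
    · rintro ⟨h1, h2⟩
      exact ⟨mul_ne_zero (Units.ne_zero a) h1, h2⟩
  erw [hpre]
  apply IsOpen.preimage continuous_subtype_val
  have : ContinuousOn (fun v : Vd d => (f v)⁻¹ • v) {v : Vd d | f v ≠ 0} := by
    exact ((fcont.continuousOn.inv₀ (fun x hx => hx)).smul continuousOn_id)
  have := this.isOpen_inter_preimage (isOpen_ne.preimage fcont) hW
  convert this using 1
  rfl


lemma tendsto_mk {w : ℕ → Vd d} {wl : Vd d} (hw : ∀ n, w n ≠ 0) (hwl : wl ≠ 0)
    (h : Tendsto w atTop (nhds wl)) :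
    Tendsto (fun n => Projectivization.mk ℝ (w n) (hw n)) atTop
      (nhds (Projectivization.mk ℝ wl hwl)) := by
  have h1 : Tendsto (fun n => (⟨w n, hw n⟩ : {v : Vd d // v ≠ 0})) atTop
      (nhds (⟨wl, hwl⟩ : {v : Vd d // v ≠ 0})) := tendsto_subtype_rng.2 h
  exact ((continuous_quot_mk).tendsto _).comp h1

lemma tendsto_pchart {p : Proj d} (hp : f p.rep ≠ 0) {u : ℕ → Proj d}
    (hu : Tendsto u atTop (nhds p)) :
    Tendsto (fun n => pchart f (u n)) atTop (nhds (pchart f p)) := by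
  rw [tendsto_nhds]
  intro W hW hpW
  have hO : IsOpen {z : Proj d | f z.rep ≠ 0 ∧ pchart f z ∈ W} := isOpen_chart_set hW
  have hpO : p ∈ {z : Proj d | f z.rep ≠ 0 ∧ pchart f z ∈ W} := ⟨hp, hpW⟩
  filter_upwards [hu (hO.mem_nhds hpO)] with n hn
  exact hn.2

lemma f_eq_one_of_mem_closure {Ω : Set (Proj d)} (hc : ∀ x ∈ Ω, f x.rep ≠ 0) {w : Vd d}
    (hw : w ∈ closure (pchart f '' Ω)) : f w = 1 := by
  have : closure (pchart f '' Ω) ⊆ {w : Vd d | f w = 1} := by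
    apply closure_minimal _ (isClosed_eq fcont continuous_const)
    rintro _ ⟨z, hz, rfl⟩
    exact f_pchart (hc z hz)
  exact this hw

lemma mk_mem_closure {Ω : Set (Proj d)} (hc : ∀ x ∈ Ω, f x.rep ≠ 0) {w : Vd d}
    (hw : w ∈ closure (pchart f '' Ω)) :
    ∃ hw0 : w ≠ 0, Projectivization.mk ℝ w hw0 ∈ closure Ω ∧
      pchart f (Projectivization.mk ℝ w hw0) = w := by
  have hf1 : f w = 1 := f_eq_one_of_mem_closure hc hw
  have hw0 : w ≠ 0 := by intro h; rw [h, map_zero] at hf1; norm_num at hf1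
  refine ⟨hw0, ?_, by rw [pchart_mk, hf1]; simp⟩
  obtain ⟨wseq, hwseq, hlim⟩ := mem_closure_iff_seq_limit.1 hw
  have h1 : ∀ n, ∃ z ∈ Ω, pchart f z = wseq n := by
    intro n; obtain ⟨z, hz, hz2⟩ := hwseq n; exact ⟨z, hz, hz2⟩
  choose z hzΩ hz2 using h1
  have hne : ∀ n, wseq n ≠ 0 := by
    intro n; rw [← hz2 n]; exact pchart_ne_zero (hc _ (hzΩ n))
  have hmkz : ∀ n, Projectivization.mk ℝ (wseq n) (hne n) = z n := by
    intro n
    have := mk_pchart (f := f) (hc _ (hzΩ n))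
    rw [← this]
    congr 1
    exact (hz2 n).symm
  have := tendsto_mk hne hw0 hlim
  apply mem_closure_of_tendsto this
  filter_upwards with n
  rw [hmkz n]; exact hzΩ n

lemma chart_rel_open {Ω : Set (Proj d)} (hΩ : IsOpen Ω) (hc : ∀ x ∈ Ω, f x.rep ≠ 0)
    {z : Proj d} (hz : z ∈ Ω) :
    ∃ δ > 0, ∀ w : Vd d, f w = 1 → ‖w - pchart f z‖ < δ → w ∈ pchart f '' Ω := by
  have hq : IsQuotientMap (@Quotient.mk' _ (projectivizationSetoid ℝ (Vd d))) :=
    isQuotientMap_quotient_mk'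
  have hU : IsOpen ((@Quotient.mk' _ (projectivizationSetoid ℝ (Vd d))) ⁻¹' Ω) :=
    hq.continuous.isOpen_preimage _ hΩ
  obtain ⟨G, hG, hGU⟩ := isOpen_induced_iff.1 hU
  have hz0 : pchart f z ≠ 0 := pchart_ne_zero (hc z hz)
  have hmem : pchart f z ∈ G := by
    have : (⟨pchart f z, hz0⟩ : {v : Vd d // v ≠ 0}) ∈
        (@Quotient.mk' _ (projectivizationSetoid ℝ (Vd d))) ⁻¹' Ω := by
      show Projectivization.mk ℝ (pchart f z) hz0 ∈ Ω
      rw [mk_pchart (hc z hz)]; exact hz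
    rw [← hGU] at this
    exact this
  obtain ⟨δ, hδ, hball⟩ := Metric.isOpen_iff.1 hG _ hmem
  refine ⟨δ, hδ, fun w hw1 hwd => ?_⟩
  have hw0 : w ≠ 0 := by intro h; rw [h, map_zero] at hw1; norm_num at hw1
  have hwG : w ∈ G := hball (by rwa [Metric.mem_ball, dist_eq_norm])
  have : (⟨w, hw0⟩ : {v : Vd d // v ≠ 0}) ∈
      (@Quotient.mk' _ (projectivizationSetoid ℝ (Vd d))) ⁻¹' Ω := by
    rw [← hGU]; exact hwG
  have hmkΩ : Projectivization.mk ℝ w hw0 ∈ Ω := this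
  refine ⟨Projectivization.mk ℝ w hw0, hmkΩ, ?_⟩
  rw [pchart_mk, hw1]; simp


def Rel (C : Set (Vd d)) (x y : Vd d) : Prop :=
  ∃ ε > (0:ℝ), ∃ δ > (0:ℝ), x + ε • (x - y) ∈ C ∧ y + δ • (y - x) ∈ C

lemma rel_refl {C : Set (Vd d)} {x : Vd d} (hx : x ∈ C) : Rel C x x :=
  ⟨1, one_pos, 1, one_pos, by simpa, by simpa⟩

lemma rel_symm {C : Set (Vd d)} {x y : Vd d} (h : Rel C x y) : Rel C y x := by
  obtain ⟨ε, hε, δ, hδ, h1, h2⟩ := h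
  exact ⟨δ, hδ, ε, hε, h2, h1⟩

lemma rel_trans {C : Set (Vd d)} (hC : Convex ℝ C) {x y z : Vd d}
    (h1 : Rel C x y) (h2 : Rel C y z) : Rel C x z := by
  obtain ⟨ε₁, hε₁, ε₂, hε₂, ha, hb⟩ := h1
  obtain ⟨δ₁, hδ₁, δ₂, hδ₂, hc, he⟩ := h2
  have hd1 : (0:ℝ) < 1 + ε₁ + δ₁ := by linarith
  have hd2 : (0:ℝ) < 1 + ε₂ + δ₂ := by linarith
  refine ⟨ε₁ * δ₁ / (1 + ε₁ + δ₁), by positivity, ε₂ * δ₂ / (1 + ε₂ + δ₂), by positivity, ?_, ?_⟩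
  · have hconv := hC ha hc (le_of_lt (by positivity : (0:ℝ) < (1 + δ₁) / (1 + ε₁ + δ₁)))
      (le_of_lt (by positivity : (0:ℝ) < ε₁ / (1 + ε₁ + δ₁)))
      (by rw [← add_div, add_right_comm]; exact div_self hd1.ne')
    convert hconv using 1
    match_scalars <;> (field_simp; try first | ring1 | (left; ring1))
  · have hconv := hC he hb (le_of_lt (by positivity : (0:ℝ) < (1 + ε₂) / (1 + ε₂ + δ₂)))
      (le_of_lt (by positivity : (0:ℝ) < δ₂ / (1 + ε₂ + δ₂)))
      (by rw [← add_div]; exact div_self hd2.ne')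
    convert hconv using 1
    match_scalars <;> (field_simp; try first | ring1 | (left; ring1))

lemma param_mem_openSegment {a b : Vd d} {p : ℝ} (h0 : 0 < p) (h1 : p < 1) :
    a + p • (b - a) ∈ openSegment ℝ a b :=
  ⟨1 - p, p, by linarith, h0, by ring, by module⟩

lemma openSegment_of_rel {C : Set (Vd d)} (hC : Convex ℝ C) {x y : Vd d}
    (h : Rel C x y) :
    ∃ a b : Vd d, openSegment ℝ a b ⊆ C ∧ x ∈ openSegment ℝ a b ∧ y ∈ openSegment ℝ a b := by
  obtain ⟨ε, hε, δ, hδ, ha, hb⟩ := h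
  have hd : (0:ℝ) < 1 + ε + δ := by linarith
  refine ⟨x + ε • (x - y), y + δ • (y - x), hC.openSegment_subset ha hb, ?_, ?_⟩
  · refine ⟨(1 + δ) / (1 + ε + δ), ε / (1 + ε + δ), by positivity, by positivity,
      by rw [← add_div, div_eq_one_iff_eq hd.ne']; ring, ?_⟩
    match_scalars <;> (field_simp; try first | ring1 | (left; ring1))
  · refine ⟨δ / (1 + ε + δ), (1 + ε) / (1 + ε + δ), by positivity, by positivity,
      by rw [← add_div, div_eq_one_iff_eq hd.ne']; ring, ?_⟩
    match_scalars <;> (field_simp; try first | ring1 | (left; ring1))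

lemma rel_of_openSegment {C : Set (Vd d)} {x y a b : Vd d} (hxy : x ≠ y)
    (hseg : openSegment ℝ a b ⊆ C) (hx : x ∈ openSegment ℝ a b)
    (hy : y ∈ openSegment ℝ a b) : Rel C x y := by
  obtain ⟨u₁, v₁, hu₁, hv₁, huv₁, hx'⟩ := hx
  obtain ⟨u₂, v₂, hu₂, hv₂, huv₂, hy'⟩ := hy
  have hab : a ≠ b := by
    rintro rfl
    apply hxy
    have e1 : u₁ • a + v₁ • a = a := by rw [← add_smul, huv₁, one_smul]
    have e2 : u₂ • a + v₂ • a = a := by rw [← add_smul, huv₂, one_smul]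
    rw [← hx', ← hy', e1, e2]
  have hx2 : x = a + v₁ • (b - a) := by
    have h1 : u₁ = 1 - v₁ := by linarith
    rw [← hx', h1]; module
  have hy2 : y = a + v₂ • (b - a) := by
    have h1 : u₂ = 1 - v₂ := by linarith
    rw [← hy', h1]; module
  have hvne : v₁ ≠ v₂ := by
    intro h; exact hxy (by rw [hx2, hy2, h])
  have hv₁1 : v₁ < 1 := by linarith
  have hv₂1 : v₂ < 1 := by linarith
  set D := |v₂ - v₁| with hD
  have hDpos : 0 < D := abs_pos.2 (sub_ne_zero.2 (Ne.symm hvne))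
  have habs : |v₁ - v₂| = D := by rw [hD, abs_sub_comm]
  have hm3 : 0 < min v₁ (1 - v₁) := lt_min hv₁ (by linarith)
  have hm3' : 0 < min v₂ (1 - v₂) := lt_min hv₂ (by linarith)
  refine ⟨min v₁ (1 - v₁) / (2 * D), div_pos hm3 (by positivity), min v₂ (1 - v₂) / (2 * D),
    div_pos hm3' (by positivity), ?_, ?_⟩
  · set ε := min v₁ (1 - v₁) / (2 * D) with hε
    have hεpos : 0 < ε := div_pos hm3 (by positivity)
    have hx3 : x + ε • (x - y) = a + (v₁ + ε * (v₁ - v₂)) • (b - a) := by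
      rw [hx2, hy2]; module
    have hbnd : |ε * (v₁ - v₂)| = min v₁ (1 - v₁) / 2 := by
      rw [abs_mul, abs_of_pos hεpos, habs, hε]
      field_simp
    have h1 := abs_le.1 hbnd.le
    have hm1 : min v₁ (1 - v₁) ≤ v₁ := min_le_left _ _
    have hm2 : min v₁ (1 - v₁) ≤ 1 - v₁ := min_le_right _ _
    rw [hx3]
    exact hseg (param_mem_openSegment (by linarith) (by linarith))
  · set δ := min v₂ (1 - v₂) / (2 * D) with hδ
    have hδpos : 0 < δ := div_pos hm3' (by positivity)
    have hy3 : y + δ • (y - x) = a + (v₂ + δ * (v₂ - v₁)) • (b - a) := by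
      rw [hx2, hy2]; module
    have hbnd : |δ * (v₂ - v₁)| = min v₂ (1 - v₂) / 2 := by
      rw [abs_mul, abs_of_pos hδpos, ← hD, hδ]
      field_simp
    have h1 := abs_le.1 hbnd.le
    have hm1 : min v₂ (1 - v₂) ≤ v₂ := min_le_left _ _
    have hm2 : min v₂ (1 - v₂) ≤ 1 - v₂ := min_le_right _ _
    rw [hy3]
    exact hseg (param_mem_openSegment (by linarith) (by linarith))


lemma mem_affFace_of_rel {K : Set (Vd d)} (hK : Convex ℝ (closure K)) {x y : Vd d}
    (hy : y ∈ closure K) (h : Rel (closure K) x y) : y ∈ affFace K x := by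
  obtain ⟨a, b, h1, h2, h3⟩ := openSegment_of_rel hK h
  exact Set.mem_insert_iff.2 (Or.inr ⟨hy, a, b, h1, h2, h3⟩)

lemma rel_of_mem_affFace {K : Set (Vd d)} {x y : Vd d} (hx : x ∈ closure K)
    (hy : y ∈ affFace K x) : y = x ∨ (y ∈ closure K ∧ Rel (closure K) x y) := by
  rcases hy with rfl | ⟨hyc, a, b, hss, hxm, hym⟩
  · exact Or.inl rfl
  · refine Or.inr ⟨hyc, ?_⟩
    by_cases hxy : x = y
    · subst hxy; exact rel_refl hx
    · exact rel_of_openSegment hxy hss hxm hym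

lemma affFace_eq_of_rel {K : Set (Vd d)} (hK : Convex ℝ (closure K)) {x y : Vd d}
    (hx : x ∈ closure K) (hy : y ∈ closure K) (h : Rel (closure K) x y) :
    affFace K x = affFace K y := by
  have key : ∀ u v : Vd d, u ∈ closure K → v ∈ closure K → Rel (closure K) u v →
      affFace K u ⊆ affFace K v := by
    intro u v hu hv huv z hz
    rcases rel_of_mem_affFace hu hz with rfl | ⟨hzc, hrz⟩
    · exact mem_affFace_of_rel hK hu (rel_symm huv)
    · exact mem_affFace_of_rel hK hzc (rel_trans hK (rel_symm huv) hrz)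
  exact subset_antisymm (key x y hx hy h) (key y x hy hx (rel_symm h))

lemma pface_eq_sep {f : Vd d →ₗ[ℝ] ℝ} {Ω : Set (Proj d)} {p : Proj d} (hp : p ∈ closure Ω) :
    pface f Ω p = {y ∈ closure Ω | pchart f y ∈ affFace (pchart f '' Ω) (pchart f p)} :=
  insert_eq_self.2 ⟨hp, mem_insert _ _⟩

lemma pface_chart_subset {f : Vd d →ₗ[ℝ] ℝ} {Ω : Set (Proj d)} {p : Proj d}
    (hx : pchart f p ∈ closure (pchart f '' Ω)) :
    pchart f '' pface f Ω p ⊆ closure (pchart f '' Ω) := by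
  rintro _ ⟨z, hz, rfl⟩
  rcases hz with rfl | ⟨hzc, hface⟩
  · exact hx
  · rcases hface with heq | ⟨h1, -⟩
    · rw [heq]; exact hx
    · exact h1

lemma segSet_closed {K : Set (Vd d)} (x y : Vd d) : IsClosed (segSet K x y) :=
  IsClosed.preimage (continuous_const.add (continuous_id.smul continuous_const))
    isClosed_closure

lemma segSet_zero_mem {K : Set (Vd d)} {x : Vd d} (y : Vd d) (hx : x ∈ closure K) :
    (0:ℝ) ∈ segSet K x y := by
  show x + (0:ℝ) • (y - x) ∈ closure K
  simpa using hx

lemma segSet_one_mem {K : Set (Vd d)} {y : Vd d} (x : Vd d) (hy : y ∈ closure K) :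
    (1:ℝ) ∈ segSet K x y := by
  show x + (1:ℝ) • (y - x) ∈ closure K
  simpa using hy

lemma segSet_abs_le {K : Set (Vd d)} {x y : Vd d} {B : ℝ}
    (hb : ∀ w ∈ closure K, ‖w‖ ≤ B) (hx : x ∈ closure K) (hxy : x ≠ y) :
    ∀ t ∈ segSet K x y, |t| ≤ 2 * B / ‖y - x‖ := by
  intro t ht
  have hpos : 0 < ‖y - x‖ := norm_pos_iff.2 (sub_ne_zero.2 (Ne.symm hxy))
  have h1 : ‖x + t • (y - x)‖ ≤ B := hb _ ht
  have h2 : ‖x‖ ≤ B := hb _ hx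
  have h3 : ‖t • (y - x)‖ ≤ ‖x + t • (y - x)‖ + ‖x‖ := by
    calc ‖t • (y - x)‖ = ‖(x + t • (y - x)) - x‖ := by rw [add_sub_cancel_left]
    _ ≤ ‖x + t • (y - x)‖ + ‖x‖ := norm_sub_le _ _
  rw [norm_smul, Real.norm_eq_abs] at h3
  rw [le_div_iff₀ hpos]
  nlinarith

lemma segSet_bddAbove {K : Set (Vd d)} {x y : Vd d} {B : ℝ}
    (hb : ∀ w ∈ closure K, ‖w‖ ≤ B) (hx : x ∈ closure K) (hxy : x ≠ y) :
    BddAbove (segSet K x y) :=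
  ⟨2 * B / ‖y - x‖, fun t ht => (le_abs_self t).trans (segSet_abs_le hb hx hxy t ht)⟩

lemma segSet_bddBelow {K : Set (Vd d)} {x y : Vd d} {B : ℝ}
    (hb : ∀ w ∈ closure K, ‖w‖ ≤ B) (hx : x ∈ closure K) (hxy : x ≠ y) :
    BddBelow (segSet K x y) :=
  ⟨-(2 * B / ‖y - x‖), fun t ht => neg_le.1 ((neg_le_abs t).trans (segSet_abs_le hb hx hxy t ht))⟩

lemma exists_norm_bound {K : Set (Vd d)} (hKb : Bornology.IsBounded K) :
    ∃ B : ℝ, 0 < B ∧ ∀ w ∈ closure K, ‖w‖ ≤ B := by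
  obtain ⟨B, hB⟩ := isBounded_iff_forall_norm_le.1 (Bornology.IsBounded.closure hKb)
  exact ⟨max B 1, lt_max_of_lt_right one_pos, fun w hw => (hB w hw).trans (le_max_left _ _)⟩

lemma affHilbertDist_nonneg {K : Set (Vd d)} (hKb : Bornology.IsBounded K) {x y : Vd d}
    (hx : x ∈ closure K) (hy : y ∈ closure K) : 0 ≤ affHilbertDist K x y := by
  unfold affHilbertDist
  split
  · exact le_refl 0
  · rename_i hxy
    obtain ⟨B, hB0, hB⟩ := exists_norm_bound hKb
    set r := sInf (segSet K x y) with hr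
    set s := sSup (segSet K x y) with hs
    have hr0 : r ≤ 0 := csInf_le (segSet_bddBelow hB hx hxy) (segSet_zero_mem y hx)
    have hs1 : 1 ≤ s := le_csSup (segSet_bddAbove hB hx hxy) (segSet_one_mem x hy)
    have hden : 0 ≤ (s - 1) * (-r) := mul_nonneg (by linarith) (by linarith)
    rcases eq_or_lt_of_le hden with hden0 | hdenp
    · rw [← hden0, div_zero, Real.log_zero, mul_zero]
    · have hnum : (s - 1) * (-r) ≤ s * (1 - r) := by nlinarith
      have : (1:ℝ) ≤ s * (1 - r) / ((s - 1) * (-r)) := (one_le_div hdenp).2 hnum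
      have := Real.log_nonneg this
      positivity


lemma my_le_of_forall_pos {a b : ℝ} (h : ∀ ε > 0, a ≤ b + ε) : a ≤ b := by
  by_contra hc
  push_neg at hc
  have := h ((a - b)/2) (by linarith)
  linarith

lemma f_pchart_one {f : Vd d →ₗ[ℝ] ℝ} {Ω : Set (Proj d)} (hΩ : IsPCDomain f Ω) {z : Proj d}
    (hz : z ∈ closure Ω) : f (pchart f z) = 1 := f_pchart (hΩ.pc.chartOK z hz)

lemma sSup_segSet_gt_one {f : Vd d →ₗ[ℝ] ℝ} {Ω : Set (Proj d)} (hΩ : IsPCDomain f Ω)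
    {pz qz : Proj d} (hpz : pz ∈ Ω) (hqz : qz ∈ Ω)
    (hne : pchart f pz ≠ pchart f qz) :
    1 < sSup (segSet (pchart f '' Ω) (pchart f pz) (pchart f qz)) := by
  set x := pchart f pz
  set y := pchart f qz
  set K := pchart f '' Ω with hK
  obtain ⟨B, hB0, hB⟩ := exists_norm_bound hΩ.pc.bounded
  have hcq : qz ∈ closure Ω := subset_closure hqz
  have hcp : pz ∈ closure Ω := subset_closure hpz
  have hfx : f x = 1 := f_pchart_one hΩ hcp
  have hfy : f y = 1 := f_pchart_one hΩ hcq
  have hxK : x ∈ closure K := subset_closure ⟨pz, hpz, rfl⟩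
  obtain ⟨δ, hδ, hrel⟩ := chart_rel_open hΩ.isOpen (fun z hz => hΩ.pc.chartOK z (subset_closure hz)) hqz
  have hnorm : 0 < ‖y - x‖ := norm_pos_iff.2 (sub_ne_zero.2 (Ne.symm hne))
  set u := min (δ / (2 * ‖y - x‖)) 1 with hu
  have hupos : 0 < u := lt_min (by positivity) one_pos
  have hw : x + (1 + u) • (y - x) ∈ K := by
    apply hrel
    · rw [map_add, map_smul, map_sub, hfx, hfy]; simp
    · have : x + (1 + u) • (y - x) - y = u • (y - x) := by module
      rw [this, norm_smul, Real.norm_eq_abs, abs_of_pos hupos]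
      have h1 : u ≤ δ / (2 * ‖y - x‖) := min_le_left _ _
      have h2 : u * ‖y - x‖ ≤ δ / 2 := by
        calc u * ‖y - x‖ ≤ (δ / (2 * ‖y - x‖)) * ‖y - x‖ := by nlinarith
        _ = δ / 2 := by field_simp
      linarith
  have hmem : (1 + u) ∈ segSet K x y := subset_closure hw
  have hle : (1 + u) ≤ sSup (segSet K x y) :=
    le_csSup (segSet_bddAbove hB hxK hne) hmem
  linarith

lemma sInf_segSet_lt_zero {f : Vd d →ₗ[ℝ] ℝ} {Ω : Set (Proj d)} (hΩ : IsPCDomain f Ω)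
    {pz qz : Proj d} (hpz : pz ∈ Ω) (hqz : qz ∈ Ω)
    (hne : pchart f pz ≠ pchart f qz) :
    sInf (segSet (pchart f '' Ω) (pchart f pz) (pchart f qz)) < 0 := by
  set x := pchart f pz
  set y := pchart f qz
  set K := pchart f '' Ω with hK
  obtain ⟨B, hB0, hB⟩ := exists_norm_bound hΩ.pc.bounded
  have hcq : qz ∈ closure Ω := subset_closure hqz
  have hcp : pz ∈ closure Ω := subset_closure hpz
  have hfx : f x = 1 := f_pchart_one hΩ hcp
  have hfy : f y = 1 := f_pchart_one hΩ hcq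
  have hxK : x ∈ closure K := subset_closure ⟨pz, hpz, rfl⟩
  obtain ⟨δ, hδ, hrel⟩ := chart_rel_open hΩ.isOpen (fun z hz => hΩ.pc.chartOK z (subset_closure hz)) hpz
  have hnorm : 0 < ‖y - x‖ := norm_pos_iff.2 (sub_ne_zero.2 (Ne.symm hne))
  set u := min (δ / (2 * ‖y - x‖)) 1 with hu
  have hupos : 0 < u := lt_min (by positivity) one_pos
  have hw : x + (-u) • (y - x) ∈ K := by
    apply hrel
    · rw [map_add, map_smul, map_sub, hfx, hfy]; simp
    · have : x + (-u) • (y - x) - x = (-u) • (y - x) := by module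
      rw [this, norm_smul, Real.norm_eq_abs, abs_neg, abs_of_pos hupos]
      have h1 : u ≤ δ / (2 * ‖y - x‖) := min_le_left _ _
      have h2 : u * ‖y - x‖ ≤ δ / 2 := by
        calc u * ‖y - x‖ ≤ (δ / (2 * ‖y - x‖)) * ‖y - x‖ := by nlinarith
        _ = δ / 2 := by field_simp
      linarith
  have hmem : (-u) ∈ segSet K x y := subset_closure hw
  have hle : sInf (segSet K x y) ≤ -u :=
    csInf_le (segSet_bddBelow hB hxK hne) hmem
  linarith

lemma crossratio_mono {r r' s s' : ℝ} (hr : r ≤ r') (hr' : r' < 0) (hs' : 1 < s') (hs : s' ≤ s) :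
    s * (1 - r) / ((s - 1) * (-r)) ≤ s' * (1 - r') / ((s' - 1) * (-r')) := by
  have h1 : 0 < s' - 1 := by linarith
  have h2 : 0 < -r' := by linarith
  have h3 : 0 < s - 1 := by linarith
  have h4 : 0 < -r := by linarith
  rw [← div_mul_div_comm, ← div_mul_div_comm]
  apply mul_le_mul
  · rw [div_le_div_iff₀ h3 h1]; nlinarith
  · rw [div_le_div_iff₀ h4 h2]; nlinarith
  · exact div_nonneg (by linarith) h4.le
  · exact div_nonneg (by linarith) h1.le


lemma key_claim {f : Vd d →ₗ[ℝ] ℝ} {Ω : Set (Proj d)} (hΩ : IsPCDomain f Ω)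
    {p q : Proj d} {pseq qseq : ℕ → Proj d}
    (hpΩ : ∀ n, pseq n ∈ Ω) (hqΩ : ∀ n, qseq n ∈ Ω)
    (hp : Tendsto pseq atTop (nhds p)) (hq : Tendsto qseq atTop (nhds q))
    (hpc : p ∈ closure Ω) (hqc : q ∈ closure Ω)
    (hpq : pchart f p ≠ pchart f q)
    {M : ℝ} (hfreq : ∃ᶠ n in atTop, hdist f Ω (pseq n) (qseq n) < M) :
    ∃ r s : ℝ, r < 0 ∧ 1 < s ∧
      (pchart f p) + r • (pchart f q - pchart f p) ∈ closure (pchart f '' Ω) ∧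
      (pchart f p) + s • (pchart f q - pchart f p) ∈ closure (pchart f '' Ω) ∧
      s * (1 - r) ≤ Real.exp (2 * M) * ((s - 1) * (-r)) ∧
      1 ≤ Real.exp (2 * M) * ((s - 1) * (-r)) := by
  classical
  set x := pchart f p with hxdef
  set y := pchart f q with hydef
  set K := pchart f '' Ω with hKdef
  set C := Real.exp (2 * M) with hC
  obtain ⟨B, hB0, hB⟩ := exists_norm_bound hΩ.pc.bounded
  have hxn : Tendsto (fun n => pchart f (pseq n)) atTop (nhds x) :=
    tendsto_pchart (hΩ.pc.chartOK p hpc) hp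
  have hyn : Tendsto (fun n => pchart f (qseq n)) atTop (nhds y) :=
    tendsto_pchart (hΩ.pc.chartOK q hqc) hq
  set δ0 := ‖y - x‖ / 2 with hδ0
  have hnorm : 0 < ‖y - x‖ := norm_pos_iff.2 (sub_ne_zero.2 (Ne.symm hpq))
  have hδ0pos : 0 < δ0 := by positivity
  have hev : ∀ᶠ n in atTop, δ0 < ‖pchart f (qseq n) - pchart f (pseq n)‖ := by
    have : Tendsto (fun n => ‖pchart f (qseq n) - pchart f (pseq n)‖) atTop (nhds ‖y - x‖) :=
      (hyn.sub hxn).norm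
    exact this.eventually (eventually_gt_nhds (by rw [hδ0]; linarith))
  obtain ⟨φ, hφmono, hφ⟩ := Filter.extraction_of_frequently_atTop (hfreq.and_eventually hev)
  set xs : ℕ → Vd d := fun k => pchart f (pseq (φ k)) with hxs
  set ys : ℕ → Vd d := fun k => pchart f (qseq (φ k)) with hys
  have hxsK : ∀ k, xs k ∈ closure K := fun k => subset_closure ⟨pseq (φ k), hpΩ _, rfl⟩
  have hysK : ∀ k, ys k ∈ closure K := fun k => subset_closure ⟨qseq (φ k), hqΩ _, rfl⟩
  have hne : ∀ k, xs k ≠ ys k := by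
    intro k h
    have h2 : δ0 < ‖ys k - xs k‖ := (hφ k).2
    rw [← h, sub_self, norm_zero] at h2
    linarith
  set rs : ℕ → ℝ := fun k => sInf (segSet K (xs k) (ys k)) with hrs
  set ss : ℕ → ℝ := fun k => sSup (segSet K (xs k) (ys k)) with hss
  have hSne : ∀ k, (segSet K (xs k) (ys k)).Nonempty :=
    fun k => ⟨0, segSet_zero_mem _ (hxsK k)⟩
  have hbddA : ∀ k, BddAbove (segSet K (xs k) (ys k)) :=
    fun k => segSet_bddAbove hB (hxsK k) (hne k)
  have hbddB : ∀ k, BddBelow (segSet K (xs k) (ys k)) :=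
    fun k => segSet_bddBelow hB (hxsK k) (hne k)
  have hrmem : ∀ k, rs k ∈ segSet K (xs k) (ys k) :=
    fun k => (segSet_closed _ _).csInf_mem (hSne k) (hbddB k)
  have hsmem : ∀ k, ss k ∈ segSet K (xs k) (ys k) :=
    fun k => (segSet_closed _ _).csSup_mem (hSne k) (hbddA k)
  have hrneg : ∀ k, rs k < 0 := fun k => sInf_segSet_lt_zero hΩ (hpΩ _) (hqΩ _) (hne k)
  have hsgt : ∀ k, 1 < ss k := fun k => sSup_segSet_gt_one hΩ (hpΩ _) (hqΩ _) (hne k)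
  set T := 2 * B / δ0 with hT
  have habs : ∀ k, ∀ t ∈ segSet K (xs k) (ys k), |t| ≤ T := by
    intro k t ht
    have h1 := segSet_abs_le hB (hxsK k) (hne k) t ht
    have h2 : δ0 < ‖ys k - xs k‖ := (hφ k).2
    have : 2 * B / ‖ys k - xs k‖ ≤ T := by
      rw [hT]
      apply div_le_div_of_nonneg_left (by linarith) hδ0pos h2.le
    linarith [h1.trans this]
  -- cross-ratio bounds at each k
  have hcr : ∀ k, ss k * (1 - rs k) ≤ C * ((ss k - 1) * (-(rs k))) ∧
      1 ≤ C * ((ss k - 1) * (-(rs k))) := by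
    intro k
    have hden : 0 < (ss k - 1) * (-(rs k)) :=
      mul_pos (by linarith [hsgt k]) (by linarith [hrneg k])
    have hnum : 1 ≤ ss k * (1 - rs k) := by nlinarith [hsgt k, hrneg k]
    have hdist_eq : hdist f Ω (pseq (φ k)) (qseq (φ k)) =
        (1/2) * Real.log ((ss k * (1 - rs k)) / ((ss k - 1) * (-(rs k)))) := by
      show affHilbertDist K (xs k) (ys k) = _
      unfold affHilbertDist
      rw [if_neg (hne k)]
    have hlt : hdist f Ω (pseq (φ k)) (qseq (φ k)) < M := (hφ k).1
    rw [hdist_eq] at hlt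
    have hratio : (ss k * (1 - rs k)) / ((ss k - 1) * (-(rs k))) < C := by
      rw [hC]
      have hpos : 0 < (ss k * (1 - rs k)) / ((ss k - 1) * (-(rs k))) :=
        div_pos (by linarith) hden
      have hlog : Real.log ((ss k * (1 - rs k)) / ((ss k - 1) * (-(rs k)))) < 2 * M := by
        linarith
      exact (Real.log_lt_iff_lt_exp hpos).1 hlog
    constructor
    · have := (div_lt_iff₀ hden).1 hratio
      nlinarith
    · have := (div_lt_iff₀ hden).1 hratio
      nlinarith
  -- extract convergent subsequences
  have hcomp : IsCompact (Icc (-T) T) := isCompact_Icc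
  have hrmemI : ∀ k, rs k ∈ Icc (-T) T := fun k => abs_le.1 (habs k _ (hrmem k))
  have hsmemI : ∀ k, ss k ∈ Icc (-T) T := fun k => abs_le.1 (habs k _ (hsmem k))
  obtain ⟨r0, hr0I, ψ1, hψ1, hrconv⟩ := hcomp.tendsto_subseq hrmemI
  obtain ⟨s0, hs0I, ψ2, hψ2, hsconv⟩ := hcomp.tendsto_subseq (fun k => hsmemI (ψ1 k))
  set idx : ℕ → ℕ := fun k => ψ1 (ψ2 k) with hidx
  have hrconv2 : Tendsto (fun k => rs (idx k)) atTop (nhds r0) :=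
    hrconv.comp hψ2.tendsto_atTop
  have hsconv2 : Tendsto (fun k => ss (idx k)) atTop (nhds s0) := hsconv
  have hxconv : Tendsto (fun k => xs (idx k)) atTop (nhds x) :=
    hxn.comp ((hφmono.comp (hψ1.comp hψ2)).tendsto_atTop)
  have hyconv : Tendsto (fun k => ys (idx k)) atTop (nhds y) :=
    hyn.comp ((hφmono.comp (hψ1.comp hψ2)).tendsto_atTop)
  have hr0le : r0 ≤ 0 := le_of_tendsto hrconv2 (Eventually.of_forall fun k => (hrneg _).le)
  have hs0ge : 1 ≤ s0 := ge_of_tendsto hsconv2 (Eventually.of_forall fun k => (hsgt _).le)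
  have hlim1 : Tendsto (fun k => ss (idx k) * (1 - rs (idx k))) atTop (nhds (s0 * (1 - r0))) :=
    hsconv2.mul (tendsto_const_nhds.sub hrconv2)
  have hlim2 : Tendsto (fun k => C * ((ss (idx k) - 1) * (-(rs (idx k))))) atTop
      (nhds (C * ((s0 - 1) * (-r0)))) :=
    tendsto_const_nhds.mul ((hsconv2.sub tendsto_const_nhds).mul hrconv2.neg)
  have hineq1 : s0 * (1 - r0) ≤ C * ((s0 - 1) * (-r0)) :=
    le_of_tendsto_of_tendsto' hlim1 hlim2 (fun k => (hcr (idx k)).1)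
  have hineq2 : 1 ≤ C * ((s0 - 1) * (-r0)) :=
    ge_of_tendsto hlim2 (Eventually.of_forall fun k => (hcr (idx k)).2)
  have hCpos : 0 < C := Real.exp_pos _
  have hprod : 0 < (s0 - 1) * (-r0) := by
    by_contra hcon
    push_neg at hcon
    nlinarith
  have hr0 : r0 < 0 := by
    rcases lt_or_eq_of_le hr0le with h | h
    · exact h
    · rw [h, neg_zero, mul_zero] at hprod; exact absurd hprod (lt_irrefl 0)
  have hs0 : 1 < s0 := by
    rcases lt_or_eq_of_le hs0ge with h | h
    · exact h
    · rw [← h, sub_self, zero_mul] at hprod; exact absurd hprod (lt_irrefl 0)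
  have haK : x + r0 • (y - x) ∈ closure K := by
    have htend : Tendsto (fun k => xs (idx k) + rs (idx k) • (ys (idx k) - xs (idx k)))
        atTop (nhds (x + r0 • (y - x))) :=
      hxconv.add (hrconv2.smul (hyconv.sub hxconv))
    exact isClosed_closure.mem_of_tendsto htend (Eventually.of_forall fun k => hrmem (idx k))
  have hbK : x + s0 • (y - x) ∈ closure K := by
    have htend : Tendsto (fun k => xs (idx k) + ss (idx k) • (ys (idx k) - xs (idx k)))
        atTop (nhds (x + s0 • (y - x))) :=
      hxconv.add (hsconv2.smul (hyconv.sub hxconv))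
    exact isClosed_closure.mem_of_tendsto htend (Eventually.of_forall fun k => hsmem (idx k))
  exact ⟨r0, s0, hr0, hs0, haK, hbK, hineq1, hineq2⟩


lemma param_seg {x v : Vd d} {r s t : ℝ} (h1 : r < t) (h2 : t < s) :
    x + t • v ∈ openSegment ℝ (x + r • v) (x + s • v) := by
  have hsr : (0:ℝ) < s - r := by linarith
  refine ⟨(s - t)/(s - r), (t - r)/(s - r), div_pos (by linarith) hsr,
    div_pos (by linarith) hsr, ?_, ?_⟩
  · rw [← add_div]
    have h3 : s - t + (t - r) = s - r := by ring
    rw [h3]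
    exact div_self hsr.ne'
  · match_scalars <;> (field_simp; try ring)

end St2

open St2

/-- if `p_n → p`, `q_n → q` in `closure Ω` and `liminf hdist(p_n,q_n) < ∞`,
then `F_Ω(p) = F_Ω(q)` and the face Hilbert distance between `p` and `q` is at most
the liminf. -/
theorem stmt_2 {d : ℕ} (f : Vd d →ₗ[ℝ] ℝ) (Ω : Set (Proj d)) (hΩ : IsPCDomain f Ω)
    (p q : Proj d) (pseq qseq : ℕ → Proj d)
    (hpΩ : ∀ n, pseq n ∈ Ω) (hqΩ : ∀ n, qseq n ∈ Ω)
    (hp : Tendsto pseq atTop (nhds p)) (hq : Tendsto qseq atTop (nhds q))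
    (hfin : Filter.liminf (fun n => ((hdist f Ω (pseq n) (qseq n) : EReal))) atTop < ⊤) :
    pface f Ω p = pface f Ω q ∧
      (pfaceDist f Ω p p q : EReal) ≤
        Filter.liminf (fun n => ((hdist f Ω (pseq n) (qseq n) : EReal))) atTop := by
  classical
  have hpc : p ∈ closure Ω :=
    mem_closure_of_tendsto hp (Eventually.of_forall hpΩ)
  have hqc : q ∈ closure Ω :=
    mem_closure_of_tendsto hq (Eventually.of_forall hqΩ)
  have hKconv : Convex ℝ (closure (pchart f '' Ω)) := hΩ.pc.convex.closure
  have hnn : ∀ n, (0:ℝ) ≤ hdist f Ω (pseq n) (qseq n) := fun n =>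
    affHilbertDist_nonneg hΩ.pc.bounded (subset_closure ⟨_, hpΩ n, rfl⟩)
      (subset_closure ⟨_, hqΩ n, rfl⟩)
  have hΛ0 : (0:EReal) ≤ liminf (fun n => ((hdist f Ω (pseq n) (qseq n) : EReal))) atTop :=
    le_liminf_of_le (by isBoundedDefault)
      (Eventually.of_forall fun n => by exact_mod_cast hnn n)
  have hΛtop : liminf (fun n => ((hdist f Ω (pseq n) (qseq n) : EReal))) atTop ≠ ⊤ := hfin.ne
  have hΛbot : liminf (fun n => ((hdist f Ω (pseq n) (qseq n) : EReal))) atTop ≠ ⊥ := by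
    intro h
    rw [h] at hΛ0
    exact absurd hΛ0 (by simp)
  set Lr := (liminf (fun n => ((hdist f Ω (pseq n) (qseq n) : EReal))) atTop).toReal with hLr
  have hLeq : (Lr : EReal) = liminf (fun n => ((hdist f Ω (pseq n) (qseq n) : EReal))) atTop :=
    EReal.coe_toReal hΛtop hΛbot
  have hfreq : ∀ M : ℝ, Lr < M → ∃ᶠ n in atTop, hdist f Ω (pseq n) (qseq n) < M := by
    intro M hM
    by_contra hcon
    rw [Filter.not_frequently] at hcon
    have hev : ∀ᶠ n in atTop, (M : EReal) ≤ (hdist f Ω (pseq n) (qseq n) : EReal) := by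
      filter_upwards [hcon] with n hn
      rw [not_lt] at hn
      exact_mod_cast hn
    have h2 : (M : EReal) ≤ liminf (fun n => ((hdist f Ω (pseq n) (qseq n) : EReal))) atTop :=
      le_liminf_of_le (by isBoundedDefault) hev
    rw [← hLeq] at h2
    exact absurd (EReal.coe_le_coe_iff.1 h2) (not_le.2 hM)
  by_cases hpq : p = q
  · subst hpq
    refine ⟨rfl, ?_⟩
    have h0 : pfaceDist f Ω p p p = 0 := by
      unfold pfaceDist affHilbertDist
      rw [if_pos rfl]
    rw [h0]
    have : ((0:ℝ) : EReal) = (0 : EReal) := rfl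
    rw [this]
    exact hΛ0
  · have hxy : pchart f p ≠ pchart f q := fun h =>
      hpq (pchart_inj (hΩ.pc.chartOK p hpc) (hΩ.pc.chartOK q hqc) h)
    have hxcl : pchart f p ∈ closure (pchart f '' Ω) :=
      mem_closure_of_tendsto (tendsto_pchart (hΩ.pc.chartOK p hpc) hp)
        (Eventually.of_forall fun n => ⟨pseq n, hpΩ n, rfl⟩)
    have hycl : pchart f q ∈ closure (pchart f '' Ω) :=
      mem_closure_of_tendsto (tendsto_pchart (hΩ.pc.chartOK q hqc) hq)
        (Eventually.of_forall fun n => ⟨qseq n, hqΩ n, rfl⟩)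
    obtain ⟨r₁, s₁, hr₁, hs₁, ha₁, hb₁, -, -⟩ :=
      key_claim hΩ hpΩ hqΩ hp hq hpc hqc hxy (hfreq (Lr + 1) (by linarith))
    have hrel : Rel (closure (pchart f '' Ω)) (pchart f p) (pchart f q) := by
      refine ⟨-r₁, by linarith, s₁ - 1, by linarith, ?_, ?_⟩
      · have he : pchart f p + (-r₁) • (pchart f p - pchart f q) =
            pchart f p + r₁ • (pchart f q - pchart f p) := by module
        rw [he]; exact ha₁
      · have he : pchart f q + (s₁ - 1) • (pchart f q - pchart f p) =
            pchart f p + s₁ • (pchart f q - pchart f p) := by module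
        rw [he]; exact hb₁
    have hface : affFace (pchart f '' Ω) (pchart f p) = affFace (pchart f '' Ω) (pchart f q) :=
      affFace_eq_of_rel hKconv hxcl hycl hrel
    have hqface : q ∈ pface f Ω p :=
      Or.inr ⟨hqc, mem_affFace_of_rel hKconv hycl hrel⟩
    refine ⟨?_, ?_⟩
    · rw [pface_eq_sep hpc, pface_eq_sep hqc, hface]
    · have hFsub : pchart f '' pface f Ω p ⊆ closure (pchart f '' Ω) :=
        pface_chart_subset hxcl
      obtain ⟨B, hB0, hB⟩ := exists_norm_bound hΩ.pc.bounded
      have hBF : ∀ w ∈ closure (pchart f '' pface f Ω p), ‖w‖ ≤ B := fun w hw =>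
        hB w (closure_minimal hFsub isClosed_closure hw)
      have hxF : pchart f p ∈ closure (pchart f '' pface f Ω p) :=
        subset_closure ⟨p, mem_insert _ _, rfl⟩
      have hyF : pchart f q ∈ closure (pchart f '' pface f Ω p) :=
        subset_closure ⟨q, hqface, rfl⟩
      have hFbddB : BddBelow (segSet (pchart f '' pface f Ω p) (pchart f p) (pchart f q)) :=
        segSet_bddBelow hBF hxF hxy
      have hFbddA : BddAbove (segSet (pchart f '' pface f Ω p) (pchart f p) (pchart f q)) :=
        segSet_bddAbove hBF hxF hxy
      have hmain : ∀ ε > 0, pfaceDist f Ω p p q ≤ Lr + ε := by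
        intro ε hε
        obtain ⟨r0, s0, hr0, hs0, haK, hbK, hin1, hin2⟩ :=
          key_claim hΩ hpΩ hqΩ hp hq hpc hqc hxy (hfreq (Lr + ε) (by linarith))
        have hoseg : openSegment ℝ (pchart f p + r0 • (pchart f q - pchart f p))
            (pchart f p + s0 • (pchart f q - pchart f p)) ⊆ closure (pchart f '' Ω) :=
          hKconv.openSegment_subset haK hbK
        have hsegF : ∀ t : ℝ, r0 < t → t < s0 →
            t ∈ segSet (pchart f '' pface f Ω p) (pchart f p) (pchart f q) := by
          intro t ht1 ht2
          have hwseg : pchart f p + t • (pchart f q - pchart f p) ∈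
              openSegment ℝ (pchart f p + r0 • (pchart f q - pchart f p))
                (pchart f p + s0 • (pchart f q - pchart f p)) := param_seg ht1 ht2
          have hwK : pchart f p + t • (pchart f q - pchart f p) ∈ closure (pchart f '' Ω) :=
            hoseg hwseg
          obtain ⟨hw0, hmkcl, hmkchart⟩ :=
            mk_mem_closure (fun z hz => hΩ.pc.chartOK z (subset_closure hz)) hwK
          have hxoseg : pchart f p ∈ openSegment ℝ
              (pchart f p + r0 • (pchart f q - pchart f p))
              (pchart f p + s0 • (pchart f q - pchart f p)) := by
            have h0 := param_seg (x := pchart f p) (v := pchart f q - pchart f p)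
              hr0 (lt_trans one_pos hs0)
            simpa using h0
          have hzface : Projectivization.mk ℝ _ hw0 ∈ pface f Ω p := by
            refine Or.inr ⟨hmkcl, ?_⟩
            rw [hmkchart]
            exact Or.inr ⟨hwK, _, _, hoseg, hxoseg, hwseg⟩
          exact subset_closure ⟨_, hzface, hmkchart⟩
        have hrs0 : r0 < s0 := by linarith
        have hrFle : sInf (segSet (pchart f '' pface f Ω p) (pchart f p) (pchart f q)) ≤ r0 := by
          apply my_le_of_forall_pos
          intro θ hθ
          have hmin : 0 < min θ ((s0 - r0)/2) := lt_min hθ (by linarith)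
          have ht := hsegF (r0 + min θ ((s0 - r0)/2)) (by linarith)
            (by
              have := min_le_right θ ((s0 - r0)/2)
              linarith)
          calc sInf (segSet (pchart f '' pface f Ω p) (pchart f p) (pchart f q))
              ≤ r0 + min θ ((s0 - r0)/2) := csInf_le hFbddB ht
          _ ≤ r0 + θ := by have := min_le_left θ ((s0 - r0)/2); linarith
        have hsFge : s0 ≤ sSup (segSet (pchart f '' pface f Ω p) (pchart f p) (pchart f q)) := by
          apply my_le_of_forall_pos
          intro θ hθ
          have hmin : 0 < min θ ((s0 - r0)/2) := lt_min hθ (by linarith)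
          have ht := hsegF (s0 - min θ ((s0 - r0)/2))
            (by
              have := min_le_right θ ((s0 - r0)/2)
              linarith)
            (by linarith)
          have h1 : s0 - min θ ((s0 - r0)/2) ≤
              sSup (segSet (pchart f '' pface f Ω p) (pchart f p) (pchart f q)) :=
            le_csSup hFbddA ht
          have := min_le_left θ ((s0 - r0)/2)
          linarith
        have hgF : pfaceDist f Ω p p q = 1/2 * Real.log
            ((sSup (segSet (pchart f '' pface f Ω p) (pchart f p) (pchart f q)) *
              (1 - sInf (segSet (pchart f '' pface f Ω p) (pchart f p) (pchart f q)))) /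
             ((sSup (segSet (pchart f '' pface f Ω p) (pchart f p) (pchart f q)) - 1) *
              (- sInf (segSet (pchart f '' pface f Ω p) (pchart f p) (pchart f q))))) := by
          unfold pfaceDist affHilbertDist
          rw [if_neg hxy]
        have hmono := crossratio_mono hrFle hr0 hs0 hsFge
        have hg0C : s0 * (1 - r0) / ((s0 - 1) * (-r0)) ≤ Real.exp (2 * (Lr + ε)) := by
          rw [div_le_iff₀ (mul_pos (by linarith) (by linarith))]
          linarith [hin1]
        have hgFpos : 0 < (sSup (segSet (pchart f '' pface f Ω p) (pchart f p) (pchart f q)) *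
              (1 - sInf (segSet (pchart f '' pface f Ω p) (pchart f p) (pchart f q)))) /
             ((sSup (segSet (pchart f '' pface f Ω p) (pchart f p) (pchart f q)) - 1) *
              (- sInf (segSet (pchart f '' pface f Ω p) (pchart f p) (pchart f q)))) := by
          apply div_pos
          · nlinarith
          · apply mul_pos <;> linarith
        have hlog : Real.log ((sSup (segSet (pchart f '' pface f Ω p) (pchart f p) (pchart f q)) *
              (1 - sInf (segSet (pchart f '' pface f Ω p) (pchart f p) (pchart f q)))) /
             ((sSup (segSet (pchart f '' pface f Ω p) (pchart f p) (pchart f q)) - 1) *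
              (- sInf (segSet (pchart f '' pface f Ω p) (pchart f p) (pchart f q))))) ≤
            2 * (Lr + ε) := by
          have h1 : (sSup (segSet (pchart f '' pface f Ω p) (pchart f p) (pchart f q)) *
              (1 - sInf (segSet (pchart f '' pface f Ω p) (pchart f p) (pchart f q)))) /
             ((sSup (segSet (pchart f '' pface f Ω p) (pchart f p) (pchart f q)) - 1) *
              (- sInf (segSet (pchart f '' pface f Ω p) (pchart f p) (pchart f q)))) ≤
              Real.exp (2 * (Lr + ε)) := le_trans hmono hg0C
          calc Real.log _ ≤ Real.log (Real.exp (2 * (Lr + ε))) :=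
            (Real.log_le_log_iff hgFpos (Real.exp_pos _)).2 h1
          _ = 2 * (Lr + ε) := Real.log_exp _
        rw [hgF]
        linarith
      have hfinal : pfaceDist f Ω p p q ≤ Lr := my_le_of_forall_pos hmain
      calc (pfaceDist f Ω p p q : EReal) ≤ (Lr : EReal) := EReal.coe_le_coe_iff.2 hfinal
      _ = _ := hLeq
end
end
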